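/- arXiv:1108.1303 — 8 statements merged into one kernel-verified Lean document; each statement's English description precedes it below -/
import Mathlib

section
/- Let G be a finite group and n ≥ 1 a natural number. Then d_n(G) = (1/|G|^{n+1}) · Σ_{x ∈ G} |C_G(x)|^n · d_{n-1}(C_G(x)), where C_G(x) denotes the centralizer of x in G. -/
/-- The multiple commutativity degree `d_n(G)`: the number of `(n+1)`-tuples of
pairwise commuting elements of `G`, divided by `|G|^(n+1)`. -/
noncomputable def multCommDegree (G : Type*) [Group G] (n : ℕ) : ℚ :=
  (Nat.card {f : Fin (n + 1) → G // ∀ i j, Commute (f i) (f j)} : ℚ) /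
    (Nat.card G : ℚ) ^ (n + 1)

/-- Commuting `(n+1)`-tuples in `G` correspond to pairs of an element `x` and a
commuting `n`-tuple in the centralizer of `x`. -/
def commTupleEquiv (G : Type*) [Group G] (n : ℕ) :
    {f : Fin (n + 1) → G // ∀ i j, Commute (f i) (f j)} ≃
      Σ x : G, {g : Fin n → Subgroup.centralizer {x} // ∀ i j, Commute (g i) (g j)} where
  toFun f := ⟨f.1 0,
    fun i => ⟨f.1 i.succ, Subgroup.mem_centralizer_singleton_iff.2 (f.2 i.succ 0)⟩,
    fun i j => Subtype.ext (f.2 i.succ j.succ)⟩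
  invFun p := ⟨Fin.cons p.1 (fun i => (p.2.1 i : G)), by
    intro i j
    refine Fin.cases ?_ ?_ i <;> [skip; intro i'] <;>
      refine Fin.cases ?_ ?_ j <;> [skip; (intro j'); skip; (intro j')]
    · simp [Commute.refl]
    · simpa [Commute, SemiconjBy] using ((Subgroup.mem_centralizer_singleton_iff.1 (p.2.1 j').2)).symm
    · simpa [Commute, SemiconjBy] using (Subgroup.mem_centralizer_singleton_iff.1 (p.2.1 i').2)
    · simpa [Commute, SemiconjBy] using congrArg (Subtype.val) (p.2.2 i' j')⟩
  left_inv f := by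
    apply Subtype.ext
    funext i
    refine Fin.cases rfl (fun i' => rfl) i
  right_inv p := by
    refine Sigma.ext rfl (heq_of_eq ?_)
    apply Subtype.ext
    funext i
    apply Subtype.ext
    rfl

theorem multCommDegree_eq_sum_centralizer (G : Type*) [Group G] [Fintype G]
    (n : ℕ) (hn : 1 ≤ n) :
    multCommDegree G n =
      (1 / (Nat.card G : ℚ) ^ (n + 1)) *
        ∑ x : G, (Nat.card (Subgroup.centralizer {x}) : ℚ) ^ n *
          multCommDegree (Subgroup.centralizer {x}) (n - 1) := by
  classical
  obtain ⟨m, rfl⟩ : ∃ m, n = m + 1 := ⟨n - 1, (Nat.succ_pred_eq_of_pos hn).symm⟩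
  have key : (Nat.card {f : Fin (m + 1 + 1) → G // ∀ i j, Commute (f i) (f j)} : ℚ)
      = ∑ x : G, (Nat.card
          {g : Fin (m + 1) → Subgroup.centralizer {x} // ∀ i j, Commute (g i) (g j)} : ℚ) := by
    rw [Nat.card_congr (commTupleEquiv G (m + 1))]
    simp only [Nat.card_eq_fintype_card]
    rw [Fintype.card_sigma]
    push_cast
    rfl
  simp only [Nat.add_sub_cancel]
  have hsub : ∀ x : G, (Nat.card (Subgroup.centralizer {x}) : ℚ) ^ (m + 1) *
      multCommDegree (Subgroup.centralizer {x}) m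
      = (Nat.card
          {g : Fin (m + 1) → Subgroup.centralizer {x} // ∀ i j, Commute (g i) (g j)} : ℚ) := by
    intro x
    have hc : (Nat.card (Subgroup.centralizer ({x} : Set G)) : ℚ) ≠ 0 := by
      exact_mod_cast Nat.card_pos.ne'
    simp only [multCommDegree]
    rw [mul_div_assoc']
    rw [mul_comm, mul_div_assoc]
    rw [div_self (pow_ne_zero _ hc), mul_one]
  simp only [hsub]
  rw [← key, multCommDegree, one_div, div_eq_inv_mul]
end

section
/- Let G be a finite group, let g_1, …, g_{k(G)} be a system of representatives for the conjugacy classes of G (where k(G) is the number of conjugacy classes), and let n be a natural number. Then d_{n+1}(G) = (1/|G|) · Σ_{i=1}^{k(G)} (1/|cl(g_i)|^n) · d_n(C_G(g_i)), where cl(g_i) denotes the conjugacy class of g_i in G. -/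
open Finset Subgroup
section Aux

variable {G : Type*} [Group G]

/-- Commuting tuples transport along a `MulEquiv`. -/
def commTuplesEquiv {H K : Type*} [Group H] [Group K] (e : H ≃* K) (m : ℕ) :
    {f : Fin m → H // ∀ i j, Commute (f i) (f j)} ≃
      {f : Fin m → K // ∀ i j, Commute (f i) (f j)} where
  toFun f := ⟨fun i => e (f.1 i), fun i j => (f.2 i j).map e.toMonoidHom⟩
  invFun f := ⟨fun i => e.symm (f.1 i), fun i j => (f.2 i j).map e.symm.toMonoidHom⟩
  left_inv f := by ext i; simp
  right_inv f := by ext i; simp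

lemma card_commTuples_conj {x y : G} (h : IsConj x y) (m : ℕ) :
    Nat.card {f : Fin m → centralizer ({x} : Set G) // ∀ i j, Commute (f i) (f j)} =
      Nat.card {f : Fin m → centralizer ({y} : Set G) // ∀ i j, Commute (f i) (f j)} := by
  obtain ⟨a, rfl⟩ := isConj_iff.1 h
  have hmap : (centralizer ({x} : Set G)).map (MulAut.conj a : G ≃* G).toMonoidHom =
      centralizer ({a * x * a⁻¹} : Set G) := by
    ext b
    simp only [Subgroup.mem_map, mem_centralizer_singleton_iff, MulEquiv.coe_toMonoidHom,
      MulAut.conj_apply]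
    constructor
    · rintro ⟨c, hc, rfl⟩
      have h2 := (show Commute c x from hc).map (MulAut.conj a).toMonoidHom
      simpa [MulAut.conj_apply] using hc
    · intro hb
      refine ⟨a⁻¹ * b * a, ?_, by group⟩
      have := congrArg (fun z => a⁻¹ * z * a) hb
      simpa [mul_assoc] using this
  have e := ((MulAut.conj a : G ≃* G).subgroupMap (centralizer ({x} : Set G))).trans
    (MulEquiv.subgroupCongr hmap)
  exact Nat.card_congr (commTuplesEquiv e m)

/-- Decomposition of commuting `(m+1)`-tuples. -/
lemma card_commTuples_succ (G : Type*) [Group G] [Fintype G] (m : ℕ) :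
    Nat.card {f : Fin (m + 1) → G // ∀ i j, Commute (f i) (f j)} =
      ∑ x : G, Nat.card {f : Fin m → centralizer ({x} : Set G) //
        ∀ i j, Commute (f i) (f j)} := by
  classical
  have hb : Function.Bijective
      (fun p : (Σ x : G, {f : Fin m → centralizer ({x} : Set G) //
          ∀ i j, Commute (f i) (f j)}) =>
        (⟨Fin.snoc (fun i => ((p.2.1 i : G))) p.1, by
          intro i j
          induction i using Fin.lastCases with
          | last =>
            induction j using Fin.lastCases with
            | last => simp
            | cast j =>
              simp only [Fin.snoc_last, Fin.snoc_castSucc]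
              exact (Subgroup.mem_centralizer_singleton_iff.1 (p.2.1 j).2).symm
          | cast i =>
            induction j using Fin.lastCases with
            | last =>
              simp only [Fin.snoc_last, Fin.snoc_castSucc]
              exact Subgroup.mem_centralizer_singleton_iff.1 (p.2.1 i).2
            | cast j =>
              simp only [Fin.snoc_castSucc]
              exact congrArg Subtype.val (p.2.2 i j)⟩ :
          {f : Fin (m + 1) → G // ∀ i j, Commute (f i) (f j)})) := by
    constructor
    · rintro ⟨x, f, hf⟩ ⟨x', f', hf'⟩ h
      have h1 : (Fin.snoc (fun i => ((f i : G))) x : Fin (m+1) → G) =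
          Fin.snoc (fun i => ((f' i : G))) x' := congrArg Subtype.val h
      have hx : x = x' := by
        have := congrFun h1 (Fin.last m)
        simpa using this
      subst hx
      have hff : (⟨f, hf⟩ : {f : Fin m → centralizer ({x} : Set G) //
          ∀ i j, Commute (f i) (f j)}) = ⟨f', hf'⟩ := by
        apply Subtype.ext
        funext i
        apply Subtype.ext
        have := congrFun h1 i.castSucc
        simpa using this
      exact congrArg (Sigma.mk x) hff
    · rintro ⟨F, hF⟩
      refine ⟨⟨F (Fin.last m),
        ⟨fun i => ⟨F i.castSucc,
          Subgroup.mem_centralizer_singleton_iff.2 (hF i.castSucc (Fin.last m))⟩,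
         fun i j => Subtype.ext (hF i.castSucc j.castSucc)⟩⟩, ?_⟩
      apply Subtype.ext
      funext i
      induction i using Fin.lastCases with
      | last => simp
      | cast i => simp
  haveI : ∀ x : G, Fintype {f : Fin m → centralizer ({x} : Set G) //
      ∀ i j, Commute (f i) (f j)} := fun x => Fintype.ofFinite _
  haveI : Fintype {f : Fin (m + 1) → G // ∀ i j, Commute (f i) (f j)} := Fintype.ofFinite _
  rw [← Nat.card_congr (Equiv.ofBijective _ hb)]
  rw [Nat.card_eq_fintype_card, Fintype.card_sigma]
  simp [Nat.card_eq_fintype_card]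

lemma card_conjClass_mul_card_centralizer (x : G) [Fintype G] :
    Nat.card {y : G // IsConj x y} * Nat.card (centralizer ({x} : Set G)) = Nat.card G := by
  classical
  have e1 : {y : G // IsConj x y} ≃ MulAction.orbit (ConjAct G) x :=
    Equiv.subtypeEquivRight fun y => by
      rw [ConjAct.mem_orbit_conjAct, isConj_comm]
  have e2 : centralizer ({x} : Set G) ≃ MulAction.stabilizer (ConjAct G) x :=
    (Equiv.subtypeEquiv ConjAct.toConjAct.toEquiv fun k => by
      rw [Subgroup.centralizer_eq_comap_stabilizer]; exact Iff.rfl)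
  rw [Nat.card_congr e1, Nat.card_congr e2, ← Nat.card_prod,
    Nat.card_congr (MulAction.orbitProdStabilizerEquivGroup (ConjAct G) x),
    Nat.card_congr ConjAct.toConjAct.toEquiv.symm]

end Aux

set_option maxHeartbeats 1000000 in
theorem multCommDegree_succ_eq_sum_over_conjClasses (G : Type*) [Group G] [Fintype G]
    (n : ℕ) (k : ℕ) (hk : k = Nat.card (ConjClasses G)) (g : Fin k → G)
    (hg : Function.Bijective (fun i : Fin k => ConjClasses.mk (g i))) :
    multCommDegree G (n + 1) =
      (1 / (Nat.card G : ℚ)) *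
        ∑ i : Fin k, (1 / (Nat.card {y : G // IsConj (g i) y} : ℚ) ^ n) *
          multCommDegree (Subgroup.centralizer {g i}) n := by
  classical
  haveI : Fintype (ConjClasses G) := Fintype.ofFinite _
  set N : G → ℕ := fun x => Nat.card {f : Fin (n + 1) → centralizer ({x} : Set G) //
    ∀ i j, Commute (f i) (f j)} with hN
  have hNconj : ∀ x y : G, IsConj x y → N x = N y := fun x y h => card_commTuples_conj h (n + 1)
  have hsum : ∑ x : G, (N x : ℚ) =
      ∑ i : Fin k, (Nat.card {y : G // IsConj (g i) y} : ℚ) * (N (g i) : ℚ) := by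
    rw [← Finset.sum_fiberwise_of_maps_to (g := fun x : G => ConjClasses.mk x)
      (t := Finset.univ) (fun x _ => Finset.mem_univ _) (fun x => (N x : ℚ))]
    rw [← Fintype.sum_equiv (Equiv.ofBijective _ hg)
      (fun i => ∑ x ∈ Finset.univ.filter (fun x => ConjClasses.mk x = ConjClasses.mk (g i)),
        (N x : ℚ)) _ (fun i => rfl)]
    refine Finset.sum_congr rfl fun i _ => ?_
    have hterm : ∀ x ∈ Finset.univ.filter
        (fun x => ConjClasses.mk x = ConjClasses.mk (g i)), (N x : ℚ) = (N (g i) : ℚ) := by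
      intro x hx
      rw [Finset.mem_filter] at hx
      have hconj : IsConj (g i) x := isConj_comm.1 (ConjClasses.mk_eq_mk_iff_isConj.1 hx.2)
      exact_mod_cast (hNconj _ _ hconj).symm
    rw [Finset.sum_congr rfl hterm, Finset.sum_const, nsmul_eq_mul]
    congr 2
    rw [Nat.card_eq_fintype_card, Fintype.card_subtype]
    congr 1
    apply Finset.filter_congr
    intro x _
    rw [ConjClasses.mk_eq_mk_iff_isConj, isConj_comm]
  rw [multCommDegree, card_commTuples_succ G (n + 1), Nat.cast_sum, hsum, Finset.sum_div,
    Finset.mul_sum]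
  refine Finset.sum_congr rfl fun i _ => ?_
  haveI : Nonempty {y : G // IsConj (g i) y} := ⟨⟨g i, IsConj.refl _⟩⟩
  have hc0 : (Nat.card {y : G // IsConj (g i) y} : ℚ) ≠ 0 := by
    exact_mod_cast Nat.card_pos.ne'
  have hz0 : (Nat.card (centralizer ({g i} : Set G)) : ℚ) ≠ 0 := by
    exact_mod_cast Nat.card_pos.ne'
  have hcz : ((Nat.card G : ℚ)) = (Nat.card {y : G // IsConj (g i) y} : ℚ) *
      (Nat.card (centralizer ({g i} : Set G)) : ℚ) := by
    exact_mod_cast (card_conjClass_mul_card_centralizer (g i)).symm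
  have hmc : multCommDegree (centralizer ({g i} : Set G)) n =
      (N (g i) : ℚ) / (Nat.card (centralizer ({g i} : Set G)) : ℚ) ^ (n + 1) := rfl
  rw [hmc, hcz]
  generalize (Nat.card {y : G // IsConj (g i) y} : ℚ) = c at hc0 ⊢
  generalize (Nat.card (centralizer ({g i} : Set G)) : ℚ) = z at hz0 ⊢
  generalize ((N (g i)) : ℚ) = Nq
  field_simp
  ring
end

section
/- Let G be a finite group, let N be a normal subgroup of G, and let n be a natural number. Then d_n(G) ≤ d_n(G/N). -/
theorem multCommDegree_le_quotient (G : Type*) [Group G] [Finite G]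
    (N : Subgroup G) [N.Normal] (n : ℕ) :
    multCommDegree G n ≤ multCommDegree (G ⧸ N) n := by
  classical
  set k := n + 1
  set Q := G ⧸ N
  let π : G →* Q := QuotientGroup.mk' N
  -- injection from commuting tuples of G into (commuting tuples of Q) × (Fin k → N)
  let A := {f : Fin k → G // ∀ i j, Commute (f i) (f j)}
  let B := {f : Fin k → Q // ∀ i j, Commute (f i) (f j)}
  let Φ : A → B × (Fin k → N) := fun f =>
    (⟨fun i => π (f.1 i), fun i j => (f.2 i j).map π⟩,
      fun i => ⟨(Quotient.out (π (f.1 i)))⁻¹ * f.1 i, by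
        rw [← QuotientGroup.eq_one_iff (G := G) (N := N)]
        show π _ = 1
        rw [map_mul, map_inv]
        rw [QuotientGroup.mk'_apply, QuotientGroup.mk'_apply, QuotientGroup.out_eq', inv_mul_cancel]⟩)
  have hΦ : Function.Injective Φ := by
    intro f g h
    obtain ⟨h1, h2⟩ := Prod.mk.injEq _ _ _ _ ▸ h
    have hq : ∀ i, π (f.1 i) = π (g.1 i) := fun i =>
      congrArg (fun b => b.1 i) h1
    ext i
    have := congrFun h2 i
    have h3 : (Quotient.out (π (f.1 i)))⁻¹ * f.1 i
        = (Quotient.out (π (g.1 i)))⁻¹ * g.1 i := congrArg Subtype.val this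
    rw [hq i] at h3
    exact mul_left_cancel h3
  have hcard : Nat.card A ≤ Nat.card B * Nat.card N ^ k := by
    have := Nat.card_le_card_of_injective Φ hΦ
    rwa [Nat.card_prod, Nat.card_fun, Nat.card_eq_fintype_card (α := Fin k),
      Fintype.card_fin] at this
  have hG : Nat.card G = Nat.card Q * Nat.card N := by
    rw [← Subgroup.card_eq_card_quotient_mul_card_subgroup N]
  have hQpos : 0 < (Nat.card Q : ℚ) := by
    exact_mod_cast Nat.card_pos
  have hNpos : 0 < (Nat.card N : ℚ) := by
    exact_mod_cast Nat.card_pos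
  unfold multCommDegree
  rw [hG]
  push_cast
  rw [div_le_div_iff₀ (by positivity) (by positivity)]
  have : ((Nat.card A : ℚ)) ≤ (Nat.card B : ℚ) * (Nat.card N : ℚ) ^ k := by
    exact_mod_cast hcard
  calc (Nat.card A : ℚ) * (Nat.card Q : ℚ) ^ k
      ≤ ((Nat.card B : ℚ) * (Nat.card N : ℚ) ^ k) * (Nat.card Q : ℚ) ^ k := by
        apply mul_le_mul_of_nonneg_right this (by positivity)
    _ = (Nat.card B : ℚ) * ((Nat.card Q : ℚ) * (Nat.card N : ℚ)) ^ k := by ring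
end

section
/- Let G be a finite non-abelian group, let p be the smallest prime number dividing the order of G, and let n ≥ 1 be a natural number. Then d_n(G) ≤ (p^{n+1} + p^n − 1)/p^{2n+1}. -/
open Subgroup Finset

/-- Number of pairwise-commuting `m`-tuples. -/
noncomputable def cTuple (G : Type*) [Group G] (m : ℕ) : ℕ :=
  Nat.card {f : Fin m → G // ∀ i j, Commute (f i) (f j)}

section aux

variable {G : Type*} [Group G]

lemma cTuple_one : cTuple G 1 = Nat.card G := by
  refine Nat.card_congr ⟨fun f => f.1 0, fun x => ⟨fun _ => x, fun i j => Commute.refl x⟩,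
    fun f => Subtype.ext (funext fun i => by rw [Subsingleton.elim i 0]), fun x => rfl⟩

lemma my_card_sigma {ι : Type*} [Fintype ι] (κ : ι → Type*) [∀ i, Fintype (κ i)] :
    Nat.card (Σ i, κ i) = ∑ i, Nat.card (κ i) := by
  simp [Nat.card_eq_fintype_card]

lemma cTuple_subgroup_le [Finite G] (H : Subgroup G) (m : ℕ) :
    cTuple H m ≤ Nat.card H ^ m := by
  have h := Nat.card_le_card_of_injective
    (Subtype.val : {f : Fin m → H // ∀ i j, Commute (f i) (f j)} → (Fin m → H))
    Subtype.val_injective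
  simpa [cTuple, Nat.card_fun] using h

lemma cTuple_centralizer_of_center {x : G} (hx : x ∈ Subgroup.center G) (m : ℕ) :
    cTuple (Subgroup.centralizer ({x} : Set G)) m = cTuple G m := by
  refine Nat.card_congr ⟨fun g => ⟨fun i => (g.1 i : G), fun i j => ?_⟩,
    fun f => ⟨fun i => ⟨f.1 i, ?_⟩, fun i j => ?_⟩, fun g => ?_, fun f => ?_⟩
  · have := g.2 i j
    simpa [Commute, SemiconjBy, Subtype.ext_iff] using this
  · rw [Subgroup.mem_centralizer_singleton_iff]
    exact Subgroup.mem_center_iff.mp hx (f.1 i)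
  · have := f.2 i j
    simpa [Commute, SemiconjBy, Subtype.ext_iff] using this
  · ext i; rfl
  · ext i; rfl

lemma cTuple_succ_le [Finite G] [Fintype G] (m : ℕ) :
    cTuple G (m + 1) ≤ ∑ x : G, cTuple (Subgroup.centralizer ({x} : Set G)) m := by
  classical
  set T := fun x : G => {g : Fin m → (Subgroup.centralizer ({x} : Set G)) //
    ∀ i j, Commute (g i) (g j)}
  have : cTuple G (m+1) ≤ Nat.card (Σ x : G, T x) := by
    refine Nat.card_le_card_of_injective (fun f =>
      ⟨f.1 0, ⟨fun i => ⟨f.1 i.succ, ?_⟩, fun i j => ?_⟩⟩) ?_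
    · rw [Subgroup.mem_centralizer_singleton_iff]
      exact f.2 i.succ 0
    · have := f.2 i.succ j.succ
      simpa [Commute, SemiconjBy, Subtype.ext_iff] using this
    · intro f g h
      have h0 : f.1 0 = g.1 0 := congrArg Sigma.fst h
      refine Subtype.ext (funext fun i => ?_)
      induction i using Fin.cases with
      | zero => exact h0
      | succ i =>
        have := congrArg (fun s : Σ x : G, T x =>
          Fin.cases (motive := fun _ => G) s.1 (fun j => (s.2.1 j : G)) i.succ) h
        simpa using this
  calc cTuple G (m+1) ≤ Nat.card (Σ x : G, T x) := this
    _ = ∑ x : G, cTuple (Subgroup.centralizer ({x} : Set G)) m := by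
        rw [my_card_sigma]
        rfl

lemma centralizer_card_mul_le [Finite G] {x : G} (hx : x ∉ Subgroup.center G)
    (p : ℕ) (hp : p.Prime) (hmin : ∀ q : ℕ, q.Prime → q ∣ Nat.card G → p ≤ q) :
    Nat.card (Subgroup.centralizer ({x} : Set G)) * p ≤ Nat.card G := by
  set H := Subgroup.centralizer ({x} : Set G)
  have hne : H ≠ ⊤ := by
    intro h
    apply hx
    rw [Subgroup.mem_center_iff]
    intro g
    have : g ∈ H := h ▸ Subgroup.mem_top g
    exact Subgroup.mem_centralizer_singleton_iff.mp this
  have hidx1 : H.index ≠ 1 := fun h => hne (Subgroup.index_eq_one.mp h)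
  have hdvd : H.index ∣ Nat.card G := Subgroup.index_dvd_card H
  have hq : p ≤ H.index := by
    have hqp : (H.index).minFac.Prime := Nat.minFac_prime hidx1
    have h1 : p ≤ (H.index).minFac :=
      hmin _ hqp ((H.index).minFac_dvd.trans hdvd)
    have h2 : (H.index).minFac ≤ H.index :=
      Nat.minFac_le (Nat.pos_of_ne_zero (Subgroup.index_ne_zero_of_finite))
    omega
  calc Nat.card H * p ≤ Nat.card H * H.index := Nat.mul_le_mul_left _ hq
    _ = Nat.card G := H.card_mul_index

lemma center_card_mul_le [Finite G] (hna : ¬ ∀ a b : G, a * b = b * a)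
    (p : ℕ) (hp : p.Prime) (hmin : ∀ q : ℕ, q.Prime → q ∣ Nat.card G → p ≤ q) :
    Nat.card (Subgroup.center G) * (p * p) ≤ Nat.card G := by
  set m := (Subgroup.center G).index with hm
  have hdvd : m ∣ Nat.card G := Subgroup.index_dvd_card _
  have hm0 : m ≠ 0 := Subgroup.index_ne_zero_of_finite
  have hm1 : m ≠ 1 := by
    intro h
    apply hna
    intro a b
    have : a ∈ Subgroup.center G := by
      rw [show Subgroup.center G = ⊤ from Subgroup.index_eq_one.mp h]
      exact Subgroup.mem_top a
    exact (Subgroup.mem_center_iff.mp this b).symm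
  have hmnp : ¬ m.Prime := by
    intro hprime
    apply hna
    have hcard : Nat.card (G ⧸ Subgroup.center G) = m :=
      (Subgroup.index_eq_card _).symm
    haveI : Fact m.Prime := ⟨hprime⟩
    haveI : IsCyclic (G ⧸ Subgroup.center G) := isCyclic_of_prime_card hcard
    exact fun a b => commutative_of_cyclic_center_quotient
      (QuotientGroup.mk' (Subgroup.center G))
      (by rw [QuotientGroup.ker_mk']) a b
  have hpp : p * p ≤ m := by
    set q := m.minFac with hq
    have hqp : q.Prime := Nat.minFac_prime hm1
    have hqdvd : q ∣ m := m.minFac_dvd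
    have hq1 : m / q ≠ 1 := by
      intro h
      apply hmnp
      have : m = q := by
        have := Nat.div_mul_cancel hqdvd
        rw [h, one_mul] at this
        exact this.symm
      rw [this]; exact hqp
    have hdq : m / q ∣ m := Nat.div_dvd_of_dvd hqdvd
    set r := (m / q).minFac with hr
    have hrp : r.Prime := Nat.minFac_prime hq1
    have hrdvd : r ∣ m / q := (m / q).minFac_dvd
    have h1 : p ≤ q := hmin _ hqp (hqdvd.trans hdvd)
    have h2 : p ≤ r := hmin _ hrp ((hrdvd.trans hdq).trans hdvd)
    have h3 : r ≤ m / q := Nat.minFac_le (by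
      apply Nat.pos_of_ne_zero
      intro h
      apply hm0
      have := Nat.div_mul_cancel hqdvd
      rw [h, zero_mul] at this
      exact this.symm)
    calc p * p ≤ q * r := Nat.mul_le_mul h1 h2
      _ ≤ q * (m / q) := Nat.mul_le_mul_left _ h3
      _ = m := Nat.mul_div_cancel' hqdvd
  calc Nat.card (Subgroup.center G) * (p * p)
      ≤ Nat.card (Subgroup.center G) * m := Nat.mul_le_mul_left _ hpp
    _ = Nat.card G := (Subgroup.center G).card_mul_index


lemma key_ineq (G : Type*) [Group G] [Finite G]
    (p : ℕ) (hp : p.Prime) (hmin : ∀ q : ℕ, q.Prime → q ∣ Nat.card G → p ≤ q) (m : ℕ) :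
    cTuple G (m + 1) * p ^ m ≤
      Nat.card (Subgroup.center G) * (cTuple G m * p ^ m) +
        (Nat.card G - Nat.card (Subgroup.center G)) * Nat.card G ^ m := by
  classical
  cases nonempty_fintype G
  have h1 := cTuple_succ_le (G := G) m
  have hx : ∀ x : G, cTuple (Subgroup.centralizer ({x} : Set G)) m * p ^ m ≤
      if x ∈ Subgroup.center G then cTuple G m * p ^ m else Nat.card G ^ m := by
    intro x
    by_cases hxc : x ∈ Subgroup.center G
    · simp [hxc, cTuple_centralizer_of_center hxc m]
    · simp only [hxc, if_false]
      calc cTuple (Subgroup.centralizer ({x} : Set G)) m * p ^ m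
          ≤ Nat.card (Subgroup.centralizer ({x} : Set G)) ^ m * p ^ m :=
            Nat.mul_le_mul_right _ (cTuple_subgroup_le _ m)
        _ = (Nat.card (Subgroup.centralizer ({x} : Set G)) * p) ^ m := (mul_pow _ _ _).symm
        _ ≤ Nat.card G ^ m :=
            Nat.pow_le_pow_left (centralizer_card_mul_le hxc p hp hmin) m
  have hZcard : (Finset.univ.filter (fun x : G => x ∈ Subgroup.center G)).card =
      Nat.card (Subgroup.center G) := by
    rw [Nat.card_eq_fintype_card, Fintype.card_subtype]
  have hcompl : (Finset.univ.filter (fun x : G => ¬ x ∈ Subgroup.center G)).card =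
      Nat.card G - Nat.card (Subgroup.center G) := by
    have hh := Finset.card_filter_add_card_filter_not
      (s := (Finset.univ : Finset G)) (p := fun x : G => x ∈ Subgroup.center G)
    rw [Finset.card_univ, ← Nat.card_eq_fintype_card] at hh
    omega
  calc cTuple G (m + 1) * p ^ m
      ≤ (∑ x : G, cTuple (Subgroup.centralizer ({x} : Set G)) m) * p ^ m :=
        Nat.mul_le_mul_right _ h1
    _ = ∑ x : G, cTuple (Subgroup.centralizer ({x} : Set G)) m * p ^ m := Finset.sum_mul _ _ _
    _ ≤ ∑ x : G, (if x ∈ Subgroup.center G then cTuple G m * p ^ m else Nat.card G ^ m) :=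
        Finset.sum_le_sum (fun x _ => hx x)
    _ = Nat.card (Subgroup.center G) * (cTuple G m * p ^ m) +
        (Nat.card G - Nat.card (Subgroup.center G)) * Nat.card G ^ m := by
        rw [Finset.sum_ite, Finset.sum_const, Finset.sum_const, smul_eq_mul, smul_eq_mul,
          hZcard, hcompl]

lemma qstep (P N Z M u c1 c2 : ℚ) (hu : 1 ≤ u * P) (hZ : 0 ≤ Z) (hM : 0 ≤ M)
    (hP : 0 < P) (hu0 : 0 < u)
    (h1 : c2 * (u * P) ≤ Z * (c1 * (u * P)) + (N - Z) * M)
    (h2 : Z * (P * P) ≤ N)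
    (hIH : c1 * (u ^ 2 * P) ≤ (u * P + u - 1) * M) :
    c2 * (u ^ 2 * P ^ 3) ≤ (u * P ^ 2 + u * P - 1) * (N * M) := by
  have A := mul_le_mul_of_nonneg_right h1 (by positivity : (0:ℚ) ≤ P ^ 2 * u)
  have B := mul_le_mul_of_nonneg_left hIH (by positivity : (0:ℚ) ≤ Z * P ^ 2)
  have C := mul_le_mul_of_nonneg_right h2
    (mul_nonneg hM (by linarith : (0:ℚ) ≤ u * P - 1))
  nlinarith [A, B, C]

end aux

theorem multCommDegree_le_of_nonabelian (G : Type*) [Group G] [Finite G]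
    (hna : ¬ ∀ a b : G, a * b = b * a)
    (p : ℕ) (hp : p.Prime) (hdvd : p ∣ Nat.card G)
    (hmin : ∀ q : ℕ, q.Prime → q ∣ Nat.card G → p ≤ q)
    (n : ℕ) (hn : 1 ≤ n) :
    multCommDegree G n ≤ ((p : ℚ) ^ (n + 1) + (p : ℚ) ^ n - 1) / (p : ℚ) ^ (2 * n + 1) := by
  have hN : 0 < Nat.card G := Nat.card_pos
  have hZN : Nat.card (Subgroup.center G) ≤ Nat.card G :=
    Nat.le_of_dvd hN (Subgroup.card_subgroup_dvd_card _)
  have hZ1 : 1 ≤ Nat.card (Subgroup.center G) := Nat.card_pos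
  have hp0 : (0:ℚ) < (p : ℚ) := by exact_mod_cast hp.pos
  have claim : ∀ m : ℕ, (cTuple G (m+1) : ℚ) * (p:ℚ)^(2*m+1) ≤
      ((p:ℚ)^(m+1) + (p:ℚ)^m - 1) * (Nat.card G : ℚ)^(m+1) := by
    intro m
    induction m with
    | zero =>
      rw [cTuple_one]
      ring_nf
      simp
    | succ k ih =>
      have hkey := key_ineq G p hp hmin (k+1)
      have hkeyQ : (cTuple G (k+2) : ℚ) * (p:ℚ)^(k+1) ≤
          (Nat.card (Subgroup.center G) : ℚ) * ((cTuple G (k+1) : ℚ) * (p:ℚ)^(k+1)) +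
            ((Nat.card G : ℚ) - (Nat.card (Subgroup.center G) : ℚ)) * (Nat.card G : ℚ)^(k+1) := by
        have := (Nat.cast_le (α := ℚ)).mpr hkey
        push_cast [Nat.cast_sub hZN] at this
        convert this using 2 <;> push_cast <;> ring
      have hZ2 : (Nat.card (Subgroup.center G) : ℚ) * ((p:ℚ) * (p:ℚ)) ≤ (Nat.card G : ℚ) := by
        have := center_card_mul_le hna p hp hmin
        exact_mod_cast this
      have hu : (1:ℚ) ≤ (p:ℚ)^k * (p:ℚ) := by
        rw [← pow_succ]
        exact one_le_pow₀ (by exact_mod_cast hp.one_lt.le)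
      have e1 : (p:ℚ)^(k+1) = (p:ℚ)^k * (p:ℚ) := pow_succ _ _
      rw [e1] at hkeyQ
      have ih' : (cTuple G (k+1) : ℚ) * (((p:ℚ)^k)^2 * (p:ℚ)) ≤
          ((p:ℚ)^k * (p:ℚ) + (p:ℚ)^k - 1) * (Nat.card G : ℚ)^(k+1) := by
        have e2 : (p:ℚ)^(2*k+1) = ((p:ℚ)^k)^2 * (p:ℚ) := by ring
        have e3 : (p:ℚ)^(k+1) + (p:ℚ)^k - 1 = (p:ℚ)^k * (p:ℚ) + (p:ℚ)^k - 1 := by ring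
        rw [e2, e3] at ih
        exact ih
      have main := qstep (p:ℚ) (Nat.card G : ℚ) (Nat.card (Subgroup.center G) : ℚ)
        ((Nat.card G : ℚ)^(k+1)) ((p:ℚ)^k) (cTuple G (k+1) : ℚ) (cTuple G (k+2) : ℚ)
        hu (by positivity) (by positivity) hp0 (by positivity) hkeyQ hZ2 ih'
      have g1 : (p:ℚ)^(2*(k+1)+1) = ((p:ℚ)^k)^2 * (p:ℚ)^3 := by ring
      have g2 : (p:ℚ)^(k+1+1) + (p:ℚ)^(k+1) - 1 =
          (p:ℚ)^k * (p:ℚ)^2 + (p:ℚ)^k * (p:ℚ) - 1 := by ring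
      have g3 : (Nat.card G : ℚ)^(k+1+1) = (Nat.card G : ℚ) * (Nat.card G : ℚ)^(k+1) := by ring
      rw [g1, g2, g3]
      exact main
  have hNQ : (0:ℚ) < (Nat.card G : ℚ)^(n+1) := by positivity
  have hPQ : (0:ℚ) < (p:ℚ)^(2*n+1) := by positivity
  rw [show multCommDegree G n = (cTuple G (n+1) : ℚ) / (Nat.card G : ℚ)^(n+1) from rfl,
    div_le_div_iff₀ hNQ hPQ]
  exact claim n
end

section
/- Let G be a finite non-abelian group of even order and let n ≥ 1 be a natural number. Then d_n(G) ≤ (3·2^n − 1)/2^{2n+1}. -/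
/-- Number of pairwise commuting `n`-tuples. -/
noncomputable def commCount (G : Type*) [Group G] (n : ℕ) : ℕ :=
  Nat.card {f : Fin n → G // ∀ i j, Commute (f i) (f j)}

section aux

variable {G : Type*} [Group G]

lemma commCount_one : commCount G 1 = Nat.card G := by
  apply Nat.card_congr
  exact
    { toFun := fun f => f.1 0
      invFun := fun x => ⟨fun _ => x, fun i j => Commute.refl x⟩
      left_inv := by
        rintro ⟨f, hf⟩
        ext i
        have : i = 0 := Subsingleton.elim i 0
        simp [this]
      right_inv := fun x => rfl }

lemma commCount_le [Finite G] (n : ℕ) : commCount G n ≤ Nat.card G ^ n := by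
  have h1 : commCount G n ≤ Nat.card (Fin n → G) :=
    Nat.card_le_card_of_injective _ Subtype.val_injective
  have h2 : Nat.card (Fin n → G) = Nat.card G ^ n := by
    simp [Nat.card_fun, Nat.card_eq_fintype_card]
  omega

/-- `commCount` is invariant under `MulEquiv`. -/
lemma commCount_mulEquiv {H : Type*} [Group H] (e : G ≃* H) (n : ℕ) :
    commCount G n = commCount H n := by
  apply Nat.card_congr
  refine
    { toFun := fun f => ⟨fun i => e (f.1 i), fun i j => (f.2 i j).map e.toMonoidHom⟩
      invFun := fun g => ⟨fun i => e.symm (g.1 i), fun i j => (g.2 i j).map e.symm.toMonoidHom⟩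
      left_inv := ?_
      right_inv := ?_ }
  · rintro ⟨f, hf⟩; ext i; simp
  · rintro ⟨g, hg⟩; ext i; simp

lemma commCount_top (n : ℕ) : commCount (⊤ : Subgroup G) n = commCount G n :=
  commCount_mulEquiv Subgroup.topEquiv n

open Subgroup in
/-- The decomposition of commuting `(n+1)`-tuples according to the first entry. -/
lemma commCount_succ [Fintype G] (n : ℕ) :
    commCount G (n + 1) = ∑ x : G, commCount (Subgroup.centralizer {x}) n := by
  classical
  have key : {f : Fin (n + 1) → G // ∀ i j, Commute (f i) (f j)} ≃
      Σ x : G, {g : Fin n → centralizer {x} // ∀ i j, Commute (g i) (g j)} :=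
    { toFun := fun f =>
        ⟨f.1 0, fun i => ⟨f.1 i.succ, by
            rintro y hy
            rw [Set.mem_singleton_iff] at hy
            subst hy
            exact (f.2 0 i.succ)⟩,
          fun i j => Subtype.ext (f.2 i.succ j.succ)⟩
      invFun := fun p =>
        ⟨Fin.cons p.1 (fun i => (p.2.1 i : G)), by
            intro i j
            induction i using Fin.cases with
            | zero =>
              induction j using Fin.cases with
              | zero => exact Commute.refl _
              | succ j' =>
                simp only [Fin.cons_zero, Fin.cons_succ]
                exact ((p.2.1 j').2 p.1 rfl)
            | succ i' =>
              induction j using Fin.cases with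
              | zero =>
                simp only [Fin.cons_zero, Fin.cons_succ]
                exact ((p.2.1 i').2 p.1 rfl).symm
              | succ j' =>
                simp only [Fin.cons_succ]
                exact congrArg Subtype.val (p.2.2 i' j')⟩
      left_inv := by
        rintro ⟨f, hf⟩
        ext i
        exact congrFun (Fin.cons_self_tail f) i
      right_inv := by
        rintro ⟨x, g, hg⟩
        refine Sigma.ext rfl (heq_of_eq ?_)
        ext i
        simp [Fin.cons_succ] }
  letI : ∀ x : G, Fintype {g : Fin n → centralizer {x} // ∀ i j, Commute (g i) (g j)} :=
    fun x => Fintype.ofFinite _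
  letI : Fintype {f : Fin (n + 1) → G // ∀ i j, Commute (f i) (f j)} := Fintype.ofFinite _
  rw [commCount, Nat.card_congr key, Nat.card_eq_fintype_card, Fintype.card_sigma]
  simp [commCount, Nat.card_eq_fintype_card]

lemma two_mul_card_centralizer_le [Finite G] {x : G} (hx : x ∉ Subgroup.center G) :
    2 * Nat.card (Subgroup.centralizer {x}) ≤ Nat.card G := by
  set H := Subgroup.centralizer {x}
  have hmul : Nat.card H * H.index = Nat.card G := Subgroup.card_mul_index H
  have hGpos : 0 < Nat.card G := Nat.card_pos
  have hne : H ≠ ⊤ := by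
    intro h
    exact hx (Subgroup.centralizer_eq_top_iff_subset.mp h rfl)
  have h1 : H.index ≠ 1 := fun h => hne (Subgroup.index_eq_one.mp h)
  have h0 : H.index ≠ 0 := by
    intro h
    rw [h, mul_zero] at hmul
    omega
  have h2 : 2 ≤ H.index := by omega
  calc 2 * Nat.card H = Nat.card H * 2 := mul_comm _ _
    _ ≤ Nat.card H * H.index := Nat.mul_le_mul le_rfl h2
    _ = Nat.card G := hmul

lemma four_mul_card_center_le [Finite G] (hna : ¬ ∀ a b : G, a * b = b * a) :
    4 * Nat.card (Subgroup.center G) ≤ Nat.card G := by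
  set Z := Subgroup.center G
  have hmul : Nat.card Z * Z.index = Nat.card G := Subgroup.card_mul_index Z
  have hGpos : 0 < Nat.card G := Nat.card_pos
  have h0 : Z.index ≠ 0 := by
    intro h; rw [h, mul_zero] at hmul; omega
  have hcyc : ∀ p : ℕ, p.Prime → Z.index = p → False := by
    intro p hp hidx
    haveI : Fact p.Prime := ⟨hp⟩
    have hcard : Nat.card (G ⧸ Z) = p := hidx
    haveI : IsCyclic (G ⧸ Z) := isCyclic_of_prime_card hcard
    have hker : (QuotientGroup.mk' Z).ker ≤ Subgroup.center G := by
      rw [QuotientGroup.ker_mk']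
    have := commutative_of_cyclic_center_quotient (QuotientGroup.mk' Z) hker
    exact hna this
  have h1 : Z.index ≠ 1 := by
    intro h
    apply hna
    intro a b
    have ha : a ∈ Z := by
      rw [show Z = ⊤ from Subgroup.index_eq_one.mp h]
      trivial
    exact ((Subgroup.mem_center_iff.mp ha) b).symm
  have h2 : Z.index ≠ 2 := fun h => hcyc 2 Nat.prime_two h
  have h3 : Z.index ≠ 3 := fun h => hcyc 3 Nat.prime_three h
  have h4 : 4 ≤ Z.index := by omega
  calc 4 * Nat.card Z = Nat.card Z * 4 := mul_comm _ _
    _ ≤ Nat.card Z * Z.index := Nat.mul_le_mul le_rfl h4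
    _ = Nat.card G := hmul

open Finset in
/-- The key recursive inequality. -/
lemma commCount_rec [Finite G] (n : ℕ) :
    2 ^ n * commCount G (n + 1) + Nat.card (Subgroup.center G) * Nat.card G ^ n ≤
      2 ^ n * Nat.card (Subgroup.center G) * commCount G n + Nat.card G ^ (n + 1) := by
  classical
  letI : Fintype G := Fintype.ofFinite G
  set Z := Subgroup.center G
  set z := Nat.card Z with hz
  rw [commCount_succ]
  rw [Finset.mul_sum]
  rw [← Finset.sum_filter_add_sum_filter_not Finset.univ (fun x => x ∈ Z)]
  have hc : ∀ x ∈ Finset.univ.filter (fun x => x ∈ Z),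
      2 ^ n * commCount (Subgroup.centralizer {x}) n = 2 ^ n * commCount G n := by
    intro x hx
    simp only [Finset.mem_filter] at hx
    have : Subgroup.centralizer {x} = ⊤ := by
      rw [Subgroup.centralizer_eq_top_iff_subset]
      intro y hy
      rw [Set.mem_singleton_iff] at hy
      subst hy
      exact hx.2
    rw [this, commCount_top]
  have hnc : ∀ x ∈ Finset.univ.filter (fun x => ¬ x ∈ Z),
      2 ^ n * commCount (Subgroup.centralizer {x}) n ≤ Nat.card G ^ n := by
    intro x hx
    simp only [Finset.mem_filter] at hx
    have h1 : commCount (Subgroup.centralizer {x}) n ≤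
        Nat.card (Subgroup.centralizer {x}) ^ n := commCount_le n
    have h2 : 2 * Nat.card (Subgroup.centralizer {x}) ≤ Nat.card G :=
      two_mul_card_centralizer_le hx.2
    calc 2 ^ n * commCount (Subgroup.centralizer {x}) n
        ≤ 2 ^ n * Nat.card (Subgroup.centralizer {x}) ^ n := Nat.mul_le_mul le_rfl h1
      _ = (2 * Nat.card (Subgroup.centralizer {x})) ^ n := by rw [mul_pow]
      _ ≤ Nat.card G ^ n := Nat.pow_le_pow_left h2 n
  have hcard1 : (Finset.univ.filter (fun x : G => x ∈ Z)).card = z := by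
    rw [hz, Nat.card_eq_fintype_card, Fintype.card_subtype]
  have hcard2 : (Finset.univ.filter (fun x : G => x ∈ Z)).card +
      (Finset.univ.filter (fun x : G => ¬ x ∈ Z)).card = Nat.card G := by
    rw [Finset.card_filter_add_card_filter_not, Finset.card_univ,
      Nat.card_eq_fintype_card]
  have e1 : ∑ x ∈ Finset.univ.filter (fun x : G => x ∈ Z),
      2 ^ n * commCount (Subgroup.centralizer {x}) n = z * (2 ^ n * commCount G n) := by
    rw [Finset.sum_congr rfl hc, Finset.sum_const, hcard1, smul_eq_mul]
  set a := (Finset.univ.filter (fun x : G => ¬ x ∈ Z)).card with ha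
  have e2 : ∑ x ∈ Finset.univ.filter (fun x : G => ¬ x ∈ Z),
      2 ^ n * commCount (Subgroup.centralizer {x}) n ≤ a * Nat.card G ^ n := by
    calc _ ≤ ∑ _x ∈ Finset.univ.filter (fun x : G => ¬ x ∈ Z), Nat.card G ^ n :=
          Finset.sum_le_sum hnc
      _ = _ := by rw [Finset.sum_const, smul_eq_mul]
  have hza : z + a = Nat.card G := by omega
  have hmul2 : z * Nat.card G ^ n + a * Nat.card G ^ n = Nat.card G * Nat.card G ^ n := by
    rw [← add_mul, hza]
  have hpow : Nat.card G ^ (n + 1) = Nat.card G * Nat.card G ^ n := by ring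
  have hfin : z * (2 ^ n * commCount G n) = 2 ^ n * z * commCount G n := by ring
  rw [e1, hfin, hpow]
  linarith [e2, hmul2]

/-- The main inductive inequality, in natural numbers. -/
lemma commCount_main [Finite G] (hna : ¬ ∀ a b : G, a * b = b * a) (n : ℕ) :
    2 ^ (2 * n + 1) * commCount G (n + 1) + Nat.card G ^ (n + 1) ≤
      3 * 2 ^ n * Nat.card G ^ (n + 1) := by
  induction n with
  | zero =>
    rw [commCount_one]
    norm_num
    omega
  | succ n ih =>
    have hz : 4 * Nat.card (Subgroup.center G) ≤ Nat.card G :=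
      four_mul_card_center_le hna
    have hrec := commCount_rec (G := G) (n + 1)
    set P := 2 ^ n with hPdef
    set g := Nat.card G with hgdef
    set z := Nat.card (Subgroup.center G) with hzdef
    set c2 := commCount G (n + 1 + 1) with hc2
    set c1 := commCount G (n + 1) with hc1
    set g1 := g ^ (n + 1) with hg1
    obtain ⟨r, hr⟩ := Nat.exists_eq_add_of_le hz
    have ep1 : 2 ^ (n + 1) = 2 * P := by rw [hPdef, pow_succ]; ring
    have ep2 : 2 ^ (2 * n + 1) = 2 * P ^ 2 := by
      rw [hPdef, two_mul, pow_succ, pow_add]; ring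
    have ep3 : 2 ^ (2 * (n + 1) + 1) = 8 * P ^ 2 := by
      rw [hPdef, show 2 * (n + 1) + 1 = (n + n) + 3 by ring, pow_add, pow_add]; ring
    have epg : g ^ (n + 1 + 1) = g * g1 := by rw [hg1, pow_succ]; ring
    -- restate hypotheses
    rw [ep1, epg] at hrec
    -- hrec : 2 * P * c2 + z * g1 ≤ 2 * P * z * c1 + g * g1
    rw [ep2] at ih
    -- ih : 2 * P ^ 2 * c1 + g1 ≤ 3 * P * g1
    rw [ep3, epg, ep1]
    -- goal : 8 * P ^ 2 * c2 + g * g1 ≤ 3 * (2 * P) * (g * g1)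
    have M1 : 4 * P * (2 * P * c2 + z * g1) ≤ 4 * P * (2 * P * z * c1 + g * g1) :=
      Nat.mul_le_mul le_rfl hrec
    have M2 : 4 * z * (2 * P ^ 2 * c1 + g1) ≤ 4 * z * (3 * P * g1) :=
      Nat.mul_le_mul le_rfl ih
    have M3 : r * g1 ≤ P * (r * g1) :=
      le_mul_of_one_le_left (Nat.zero_le _) (Nat.one_le_two_pow)
    rw [hr] at M1 ⊢
    nlinarith [M1, M2, M3]

end aux

theorem multCommDegree_le_of_even_order (G : Type*) [Group G] [Finite G]
    (hna : ¬ ∀ a b : G, a * b = b * a) (heven : 2 ∣ Nat.card G)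
    (n : ℕ) (hn : 1 ≤ n) :
    multCommDegree G n ≤ (3 * 2 ^ n - 1 : ℚ) / 2 ^ (2 * n + 1) := by
  have key := commCount_main (G := G) hna n
  have hgpos : (0 : ℚ) < (Nat.card G : ℚ) := by exact_mod_cast Nat.card_pos
  have hgn : (0 : ℚ) < (Nat.card G : ℚ) ^ (n + 1) := by positivity
  have h2 : (0 : ℚ) < (2 : ℚ) ^ (2 * n + 1) := by positivity
  rw [multCommDegree, div_le_div_iff₀ hgn h2]
  have keyQ : ((2 ^ (2 * n + 1) * commCount G (n + 1) + Nat.card G ^ (n + 1) : ℕ) : ℚ) ≤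
      ((3 * 2 ^ n * Nat.card G ^ (n + 1) : ℕ) : ℚ) := by exact_mod_cast key
  push_cast at keyQ
  have hcc : (Nat.card {f : Fin (n + 1) → G // ∀ i j, Commute (f i) (f j)} : ℚ) =
      (commCount G (n + 1) : ℚ) := by rfl
  rw [hcc]
  nlinarith [keyQ, hgn]
end

section
/- Let G be a finite non-abelian group, let p be the smallest prime number dividing the order of G, and suppose Z(G) ∩ [G,G] = 1 (the center of G intersects the commutator subgroup of G trivially). Then for every natural number n, d_n(G) ≤ 1/p^n. -/
open Subgroup
open scoped commutatorElement

section MCDAux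

variable {G : Type*} [Group G] [Finite G]

private lemma mcd_index_ge {p : ℕ} (hp : p.Prime)
    (hmin : ∀ q : ℕ, q.Prime → q ∣ Nat.card G → p ≤ q)
    {K : Subgroup G} (hK : K ≠ ⊤) : p ≤ K.index := by
  have h1 : K.index ≠ 1 := fun h => hK (Subgroup.index_eq_one.mp h)
  have hdvd : K.index ∣ Nat.card G := K.index_dvd_card
  have hG0 : Nat.card G ≠ 0 := Nat.card_pos.ne'
  have h0 : 0 < K.index := by
    rcases Nat.eq_zero_or_pos K.index with h | h
    · exact absurd (zero_dvd_iff.mp (h ▸ hdvd)) hG0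
    · exact h
  exact le_trans (hmin _ (Nat.minFac_prime h1) ((Nat.minFac_dvd _).trans hdvd))
    (Nat.minFac_le h0)

private lemma mcd_proper {p : ℕ} (hp : p.Prime)
    (hmin : ∀ q : ℕ, q.Prime → q ∣ Nat.card G → p ≤ q)
    {K : Subgroup G} (hK : K ≠ ⊤) : p * Nat.card K ≤ Nat.card G :=
  calc p * Nat.card K ≤ K.index * Nat.card K :=
        Nat.mul_le_mul_right _ (mcd_index_ge hp hmin hK)
    _ = Nat.card G := K.index_mul_card

private lemma mcd_normal {p : ℕ} (hp : p.Prime)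
    (hmin : ∀ q : ℕ, q.Prime → q ∣ Nat.card G → p ≤ q)
    {K : Subgroup G} (hidx : K.index = p) : K.Normal := by
  have key : K.normalCore = K := by
    refine le_antisymm K.normalCore_le ?_
    have hrel : K.normalCore.relIndex K * K.index = K.normalCore.index :=
      Subgroup.relIndex_mul_index K.normalCore_le
    set m := K.normalCore.relIndex K with hm
    rw [hidx] at hrel
    have hdvdfac : K.normalCore.index ∣ p.factorial := by
      classical
      rw [Subgroup.normalCore_eq_ker, Subgroup.index_ker]
      have h1 : Nat.card (MulAction.toPermHom G (G ⧸ K)).range ∣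
          Nat.card (Equiv.Perm (G ⧸ K)) := Subgroup.card_subgroup_dvd_card _
      have hq : Nat.card (G ⧸ K) = p := by rw [← Subgroup.index_eq_card, hidx]
      cases nonempty_fintype (G ⧸ K)
      rwa [Nat.card_eq_fintype_card (α := Equiv.Perm (G ⧸ K)), Fintype.card_perm,
        ← Nat.card_eq_fintype_card, hq] at h1
    have hfac : p.factorial = p * (p - 1).factorial :=
      (Nat.mul_factorial_pred hp.ne_zero).symm
    have hmdvd : m ∣ (p - 1).factorial := by
      have h2 : m * p ∣ p * (p - 1).factorial := by
        rw [← hfac]; exact (dvd_of_eq hrel).trans hdvdfac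
      rw [mul_comm m p] at h2
      exact (mul_dvd_mul_iff_left (a := p) (Nat.Prime.ne_zero hp)).mp h2
    have hm1 : m = 1 := by
      by_contra hm1
      have hqp := Nat.minFac_prime hm1
      have hqm : m.minFac ∣ m := Nat.minFac_dvd m
      have hqG : m.minFac ∣ Nat.card G := by
        refine dvd_trans (hqm.trans ?_) K.normalCore.index_dvd_card
        exact hrel ▸ dvd_mul_right m p
      have hpq : p ≤ m.minFac := hmin _ hqp hqG
      have hle : m.minFac ≤ p - 1 := (Nat.Prime.dvd_factorial hqp).mp (hqm.trans hmdvd)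
      have := hp.two_le
      omega
    rw [← Subgroup.relIndex_eq_one, ← hm]
    exact hm1
  rw [← key]
  infer_instance

private lemma mcd_commutator_le {p : ℕ} (hp : p.Prime)
    (hmin : ∀ q : ℕ, q.Prime → q ∣ Nat.card G → p ≤ q)
    {K : Subgroup G} (hidx : K.index = p) : commutator G ≤ K := by
  haveI := mcd_normal hp hmin hidx
  haveI : Fact p.Prime := ⟨hp⟩
  have hcard : Nat.card (G ⧸ K) = p := by rw [← Subgroup.index_eq_card, hidx]
  haveI := isCyclic_of_prime_card hcard
  have hcomm : ∀ a b : G ⧸ K, a * b = b * a := by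
    obtain ⟨g, hg⟩ := IsCyclic.exists_generator (α := G ⧸ K)
    intro a b
    obtain ⟨s, rfl⟩ := hg a
    obtain ⟨r, rfl⟩ := hg b
    rw [← zpow_add, ← zpow_add, add_comm]
  rw [commutator_def, Subgroup.commutator_le]
  intro g₁ _ g₂ _
  rw [← QuotientGroup.eq_one_iff]
  have : ((⁅g₁, g₂⁆ : G) : G ⧸ K) = ⁅(g₁ : G ⧸ K), (g₂ : G ⧸ K)⁆ := by
    simp [commutatorElement_def]
  rw [this, commutatorElement_eq_one_iff_commute]
  exact hcomm _ _

private lemma mcd_L_ne_top (hna : ¬ ∀ a b : G, a * b = b * a)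
    (hzc : Subgroup.center G ⊓ commutator G = ⊥) :
    Subgroup.centralizer ((commutator G : Subgroup G) : Set G) ≠ ⊤ := by
  intro h
  apply hna
  intro a b
  have hle : commutator G ≤ center G := by
    intro c hc
    rw [Subgroup.mem_center_iff]
    intro g
    have hg : g ∈ Subgroup.centralizer ((commutator G : Subgroup G) : Set G) :=
      h ▸ Subgroup.mem_top g
    exact (Subgroup.mem_centralizer_iff.mp hg c hc).symm
  have hbot : commutator G ≤ ⊥ := fun c hc => hzc ▸ Subgroup.mem_inf.mpr ⟨hle hc, hc⟩
  have hmem : ⁅a, b⁆ ∈ commutator G := by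
    rw [_root_.commutator_def]
    exact Subgroup.commutator_mem_commutator (Subgroup.mem_top a) (Subgroup.mem_top b)
  have h4 : ⁅a, b⁆ = 1 := Subgroup.mem_bot.mp (hbot hmem)
  exact (commutatorElement_eq_one_iff_commute.mp h4).eq

private lemma mcd_quot (hna : ¬ ∀ a b : G, a * b = b * a)
    {p : ℕ} (hp : p.Prime)
    (hmin : ∀ q : ℕ, q.Prime → q ∣ Nat.card G → p ≤ q)
    (hzc : Subgroup.center G ⊓ commutator G = ⊥) :
    p * ((p + 1) * Nat.card (Subgroup.center G)) ≤ Nat.card G := by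
  set Z := Subgroup.center G with hZ
  have hcard : Nat.card G = Nat.card (G ⧸ Z) * Nat.card Z :=
    Subgroup.card_eq_card_quotient_mul_card_subgroup Z
  suffices h : p * (p + 1) ≤ Nat.card (G ⧸ Z) by
    calc p * ((p + 1) * Nat.card Z) = p * (p + 1) * Nat.card Z := by ring
      _ ≤ Nat.card (G ⧸ Z) * Nat.card Z := Nat.mul_le_mul_right _ h
      _ = Nat.card G := hcard.symm
  set n := Nat.card (G ⧸ Z) with hn
  have hn0 : 0 < n := Nat.card_pos
  have hn1 : n ≠ 1 := by
    intro h1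
    apply hna
    intro a b
    have : Z = ⊤ := by
      rw [← Subgroup.index_eq_one, Subgroup.index_eq_card, ← hn, h1]
    have ha : a ∈ Z := this ▸ Subgroup.mem_top a
    exact (Subgroup.mem_center_iff.mp ha b).symm
  have hndvd : n ∣ Nat.card G := hcard ▸ dvd_mul_right n (Nat.card Z)
  -- the quotient has trivial center
  have hcenter : Subgroup.center (G ⧸ Z) = ⊥ := by
    rw [eq_bot_iff]
    intro h hh
    obtain ⟨x, rfl⟩ := QuotientGroup.mk_surjective h
    rw [Subgroup.mem_bot]
    rw [show ((x : G ⧸ Z) = 1) ↔ x ∈ Z from QuotientGroup.eq_one_iff x]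
    rw [hZ, Subgroup.mem_center_iff]
    intro g
    have hxinv : ((x⁻¹ : G) : G ⧸ Z) ∈ Subgroup.center (G ⧸ Z) := by
      have : ((x⁻¹ : G) : G ⧸ Z) = ((x : G ⧸ Z))⁻¹ := by simp
      rw [this]
      exact inv_mem hh
    have h1 : ((⁅x⁻¹, g⁻¹⁆ : G) : G ⧸ Z) = 1 := by
      have : ((⁅x⁻¹, g⁻¹⁆ : G) : G ⧸ Z) = ⁅((x⁻¹ : G) : G ⧸ Z), ((g⁻¹ : G) : G ⧸ Z)⁆ := by
        simp only [commutatorElement_def, QuotientGroup.mk_mul, QuotientGroup.mk_inv]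
      rw [this, commutatorElement_eq_one_iff_commute]
      exact (Subgroup.mem_center_iff.mp hxinv _).symm
    have h2 : ⁅x⁻¹, g⁻¹⁆ ∈ Z := (QuotientGroup.eq_one_iff _).mp h1
    have h3 : ⁅x⁻¹, g⁻¹⁆ ∈ commutator G := by
      rw [_root_.commutator_def]
      exact Subgroup.commutator_mem_commutator (Subgroup.mem_top _) (Subgroup.mem_top _)
    have h4 : ⁅x⁻¹, g⁻¹⁆ = 1 := Subgroup.mem_bot.mp
      (hzc ▸ Subgroup.mem_inf.mpr ⟨h2, h3⟩)
    have h5 : Commute x⁻¹ g⁻¹ := commutatorElement_eq_one_iff_commute.mp h4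
    have h6 : Commute x g := by simpa using h5.inv_inv
    exact h6.symm.eq
  by_cases hpp : ∃ (q : ℕ) (k : ℕ), q.Prime ∧ n = q ^ k
  · exfalso
    obtain ⟨q, k, hq, hnq⟩ := hpp
    haveI : Fact q.Prime := ⟨hq⟩
    have hpg : IsPGroup q (G ⧸ Z) := IsPGroup.of_card hnq
    haveI : Nontrivial (G ⧸ Z) := by
      rw [← Finite.one_lt_card_iff_nontrivial]
      omega
    have hnt : Nontrivial (Subgroup.center (G ⧸ Z)) := hpg.center_nontrivial
    rw [hcenter] at hnt
    obtain ⟨⟨u, hu⟩, ⟨v, hv⟩, huv⟩ := hnt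
    rw [Subgroup.mem_bot] at hu hv
    exact huv (by simp [hu, hv])
  · have hn1' : n ≠ 1 := hn1
    set q := n.minFac with hq'
    have hq : q.Prime := Nat.minFac_prime hn1'
    set m := ordCompl[q] n with hm'
    have hm1 : m ≠ 1 := by
      intro h
      have hself := Nat.ordProj_mul_ordCompl_eq_self n q
      rw [← hm', h, mul_one] at hself
      exact hpp ⟨q, n.factorization q, hq, hself.symm⟩
    have hm0 : m ≠ 0 := (Nat.ordCompl_pos q hn0.ne').ne'
    set r := m.minFac with hr'
    have hr : r.Prime := Nat.minFac_prime hm1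
    have hrn : r ∣ n := (Nat.minFac_dvd m).trans (Nat.ordCompl_dvd n q)
    have hrq : r ≠ q := by
      intro h
      have hqm : q ∣ m := by rw [← h]; exact Nat.minFac_dvd m
      exact (Nat.not_dvd_ordCompl hq hn0.ne') hqm
    have hqn : q ∣ n := Nat.minFac_dvd n
    have co : Nat.Coprime q r := (Nat.coprime_primes hq hr).mpr (Ne.symm hrq)
    have hqr : q * r ∣ n := co.mul_dvd_of_dvd_of_dvd hqn hrn
    have hpq : p ≤ q := hmin q hq (hqn.trans hndvd)
    have hpr : p ≤ r := hmin r hr (hrn.trans hndvd)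
    have hkey : p * (p + 1) ≤ q * r := by
      rcases lt_or_gt_of_ne (Ne.symm hrq) with h | h
      · exact Nat.mul_le_mul hpq (by omega)
      · calc p * (p + 1) = (p + 1) * p := mul_comm _ _
          _ ≤ q * r := Nat.mul_le_mul (by omega) hpr
    exact le_trans hkey (Nat.le_of_dvd hn0 hqr)

private lemma mcd_arith (p a b c g s1 s2 s3 : ℕ) (hp : 2 ≤ p)
    (h1 : s1 ≤ a * g) (h2 : p * s2 ≤ b * g) (h3 : (p + 1) * s3 ≤ c * g)
    (h4 : p * ((p + 1) * a) ≤ g) (h5 : p * (a + b) ≤ g) (h6 : a + b + c = g) :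
    p * (s1 + s2 + s3) ≤ g * g := by
  zify at *
  have hp0 : (0 : ℤ) ≤ p - 1 := by linarith
  have hp1' : (0 : ℤ) ≤ p := by linarith
  have key' : (p : ℤ) * ((p : ℤ) * (p + 1) * a + (p + 1) * b + p * c) ≤ p * ((p + 1) * g) := by
    nlinarith [mul_le_mul_of_nonneg_left h4 hp0, h5,
      mul_le_mul_of_nonneg_left h6.le hp1', mul_le_mul_of_nonneg_left h6.ge hp1']
  have key : (p : ℤ) * (p + 1) * a + (p + 1) * b + p * c ≤ (p + 1) * g :=
    le_of_mul_le_mul_left key' (by linarith)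
  have hg0 : (0 : ℤ) ≤ g := by nlinarith
  have hp1 : (0 : ℤ) ≤ p := by linarith
  have key2 : ((p : ℤ) + 1) * (p * (s1 + s2 + s3)) ≤ (p + 1) * (g * g) := by
    nlinarith [mul_le_mul_of_nonneg_left h1 (mul_nonneg hp1 (by linarith : (0:ℤ) ≤ p + 1)),
      mul_le_mul_of_nonneg_left h2 (by linarith : (0:ℤ) ≤ p + 1),
      mul_le_mul_of_nonneg_left h3 hp1,
      mul_le_mul_of_nonneg_right key hg0]
  exact le_of_mul_le_mul_left key2 (by linarith)

private lemma mcd_core (hna : ¬ ∀ a b : G, a * b = b * a)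
    {p : ℕ} (hp : p.Prime)
    (hmin : ∀ q : ℕ, q.Prime → q ∣ Nat.card G → p ≤ q)
    (hzc : Subgroup.center G ⊓ commutator G = ⊥) :
    p * Nat.card {xy : G × G // Commute xy.1 xy.2} ≤ Nat.card G * Nat.card G := by
  classical
  cases nonempty_fintype G
  set w : G → ℕ := fun x => Nat.card {y : G // Commute x y} with hw
  have hcard : Nat.card {xy : G × G // Commute xy.1 xy.2} = ∑ x : G, w x := by
    rw [Nat.card_congr (Equiv.subtypeProdEquivSigmaSubtype (fun (a b : G) => Commute a b)),
      Nat.card_eq_fintype_card, Fintype.card_sigma]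
    exact Finset.sum_congr rfl fun x _ => (Nat.card_eq_fintype_card).symm
  set Z := Subgroup.center G with hZdef
  set L := Subgroup.centralizer ((commutator G : Subgroup G) : Set G) with hLdef
  set Zf := Set.toFinset (Z : Set G) with hZf
  set Lf := Set.toFinset (L : Set G) with hLf
  have hZL : Zf ⊆ Lf := by
    rw [hZf, hLf, Set.toFinset_subset_toFinset]
    exact Subgroup.center_le_centralizer _
  have w_le : ∀ x : G, w x ≤ Nat.card G := fun x =>
    Nat.card_le_card_of_injective (fun y => y.1) Subtype.val_injective
  have wx_eq : ∀ x : G, w x = Nat.card (Subgroup.centralizer ({x} : Set G)) := by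
    intro x
    exact Nat.card_congr (Equiv.subtypeEquivRight fun y =>
      ⟨fun h => Subgroup.mem_centralizer_singleton_iff.mpr h.symm,
       fun h => ((Subgroup.mem_centralizer_singleton_iff.mp h).symm : Commute x y)⟩)
  have hne_top : ∀ x : G, x ∉ Z → Subgroup.centralizer ({x} : Set G) ≠ ⊤ := by
    intro x hx h
    exact hx (Subgroup.centralizer_eq_top_iff_subset.mp h rfl)
  have hwnotZ : ∀ x : G, x ∉ Z → p * w x ≤ Nat.card G := by
    intro x hx
    rw [wx_eq]
    exact mcd_proper hp hmin (hne_top x hx)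
  have hwnotL : ∀ x : G, x ∉ L → (p + 1) * w x ≤ Nat.card G := by
    intro x hx
    have hxZ : x ∉ Z := fun h => hx (Subgroup.center_le_centralizer _ h)
    have hCne := hne_top x hxZ
    have hpidx : p ≤ (Subgroup.centralizer ({x} : Set G)).index := mcd_index_ge hp hmin hCne
    have hne : (Subgroup.centralizer ({x} : Set G)).index ≠ p := by
      intro h
      apply hx
      rw [hLdef, Subgroup.mem_centralizer_iff]
      intro c hc
      exact Subgroup.mem_centralizer_singleton_iff.mp (mcd_commutator_le hp hmin h hc)
    calc (p + 1) * w x ≤ (Subgroup.centralizer ({x} : Set G)).index * w x :=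
          Nat.mul_le_mul_right _ (by omega)
      _ = (Subgroup.centralizer ({x} : Set G)).index *
            Nat.card (Subgroup.centralizer ({x} : Set G)) := by rw [wx_eq]
      _ = Nat.card G := Subgroup.index_mul_card _
  have haZ : Zf.card = Nat.card Z := by
    rw [hZf, Set.toFinset_card, Nat.card_eq_fintype_card]
    exact Fintype.card_congr (Equiv.refl _)
  have haL : Lf.card = Nat.card L := by
    rw [hLf, Set.toFinset_card, Nat.card_eq_fintype_card]
    exact Fintype.card_congr (Equiv.refl _)
  set s1 := ∑ x ∈ Zf, w x with hs1
  set s2 := ∑ x ∈ Lf \ Zf, w x with hs2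
  set s3 := ∑ x ∈ Finset.univ \ Lf, w x with hs3
  have hsplit : ∑ x : G, w x = s1 + s2 + s3 := by
    have h1 : ∑ x ∈ Lf \ Zf, w x + ∑ x ∈ Zf, w x = ∑ x ∈ Lf, w x :=
      Finset.sum_sdiff hZL
    have h2 : ∑ x ∈ Finset.univ \ Lf, w x + ∑ x ∈ Lf, w x = ∑ x ∈ Finset.univ, w x :=
      Finset.sum_sdiff (Finset.subset_univ Lf)
    rw [← h2, ← h1]
    omega
  have b1 : s1 ≤ Zf.card * Nat.card G := by
    calc s1 ≤ Zf.card • Nat.card G := Finset.sum_le_card_nsmul _ _ _ (fun x _ => w_le x)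
      _ = Zf.card * Nat.card G := by rw [smul_eq_mul]
  have b2 : p * s2 ≤ (Lf \ Zf).card * Nat.card G := by
    rw [hs2, Finset.mul_sum]
    calc ∑ x ∈ Lf \ Zf, p * w x ≤ (Lf \ Zf).card • Nat.card G := by
          refine Finset.sum_le_card_nsmul _ _ _ ?_
          intro x hx
          have hxZ : x ∉ Z := by
            have := (Finset.mem_sdiff.mp hx).2
            rw [hZf, Set.mem_toFinset] at this
            exact this
          exact hwnotZ x hxZ
      _ = (Lf \ Zf).card * Nat.card G := by rw [smul_eq_mul]
  have b3 : (p + 1) * s3 ≤ (Finset.univ \ Lf).card * Nat.card G := by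
    rw [hs3, Finset.mul_sum]
    calc ∑ x ∈ Finset.univ \ Lf, (p + 1) * w x ≤ (Finset.univ \ Lf).card • Nat.card G := by
          refine Finset.sum_le_card_nsmul _ _ _ ?_
          intro x hx
          have hxL : x ∉ L := by
            have := (Finset.mem_sdiff.mp hx).2
            rw [hLf, Set.mem_toFinset] at this
            exact this
          exact hwnotL x hxL
      _ = (Finset.univ \ Lf).card * Nat.card G := by rw [smul_eq_mul]
  have A1 : p * ((p + 1) * Zf.card) ≤ Nat.card G := by
    rw [haZ]
    exact mcd_quot hna hp hmin hzc
  have hab : Zf.card + (Lf \ Zf).card = Lf.card := by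
    have := Finset.card_sdiff_of_subset hZL
    have hle := Finset.card_le_card hZL
    omega
  have A2 : p * (Zf.card + (Lf \ Zf).card) ≤ Nat.card G := by
    rw [hab, haL]
    exact mcd_proper hp hmin (mcd_L_ne_top hna hzc)
  have h6 : Zf.card + (Lf \ Zf).card + (Finset.univ \ Lf).card = Nat.card G := by
    have h7 := Finset.card_sdiff_of_subset (Finset.subset_univ Lf)
    have h8 : (Finset.univ : Finset G).card = Nat.card G := by
      rw [Finset.card_univ, Nat.card_eq_fintype_card]
    have hle := Finset.card_le_card (Finset.subset_univ Lf)
    omega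
  rw [hcard, hsplit]
  exact mcd_arith p Zf.card (Lf \ Zf).card (Finset.univ \ Lf).card (Nat.card G) s1 s2 s3
    hp.two_le b1 b2 b3 A1 A2 h6

private lemma mcd_card_sigma {ι : Type*} [Fintype ι] (f : ι → Type*) [∀ i, Fintype (f i)] :
    Nat.card (Σ i, f i) = ∑ i, Nat.card (f i) := by
  simp [Nat.card_eq_fintype_card]

private def mcdEquiv {G : Type*} [Group G] (m : ℕ) :
    {f : Fin (m + 1) → G // ∀ i j, Commute (f i) (f j)} ≃
      Σ t : {f : Fin m → G // ∀ i j, Commute (f i) (f j)}, {x : G // ∀ i, Commute (t.1 i) x} where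
  toFun f := ⟨⟨Fin.tail f.1, fun i j => f.2 i.succ j.succ⟩, ⟨f.1 0, fun i => f.2 i.succ 0⟩⟩
  invFun s := ⟨Fin.cons s.2.1 s.1.1, by
    intro i j
    refine Fin.cases ?_ (fun i' => ?_) i <;> refine Fin.cases ?_ (fun j' => ?_) j
    · rw [Fin.cons_zero]
    · rw [Fin.cons_zero, Fin.cons_succ]; exact (s.2.2 j').symm
    · rw [Fin.cons_succ, Fin.cons_zero]; exact s.2.2 i'
    · rw [Fin.cons_succ, Fin.cons_succ]; exact s.1.2 i' j'⟩
  left_inv f := Subtype.ext (Fin.cons_self_tail f.1)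
  right_inv s := rfl

private def mcdConsEquiv {G : Type*} [Group G] {m : ℕ} (t : Fin m → G) (x : G) :
    {y : G // ∀ i, Commute ((Fin.cons x t : Fin (m + 1) → G) i) y} ≃
      {y : G // Commute x y ∧ ∀ i, Commute (t i) y} :=
  Equiv.subtypeEquivRight fun y => by
    constructor
    · intro h
      refine ⟨?_, fun i => ?_⟩
      · have := h 0; rwa [Fin.cons_zero] at this
      · have := h i.succ; rwa [Fin.cons_succ] at this
    · rintro ⟨h1, h2⟩ i
      refine Fin.cases ?_ (fun j => ?_) i
      · rwa [Fin.cons_zero]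
      · rw [Fin.cons_succ]; exact h2 j

private lemma mcd_per_t (hna : ¬ ∀ a b : G, a * b = b * a)
    {p : ℕ} (hp : p.Prime)
    (hmin : ∀ q : ℕ, q.Prime → q ∣ Nat.card G → p ≤ q)
    (hzc : Subgroup.center G ⊓ commutator G = ⊥) {m : ℕ} (t : Fin m → G) :
    p * Nat.card (Σ x : {x : G // ∀ i, Commute (t i) x},
        {y : G // Commute x.1 y ∧ ∀ i, Commute (t i) y}) ≤
      Nat.card G * Nat.card {x : G // ∀ i, Commute (t i) x} := by
  classical
  cases nonempty_fintype G
  by_cases hc : ∀ i, t i ∈ Subgroup.center G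
  · have e1 : {x : G // ∀ i, Commute (t i) x} ≃ G :=
      Equiv.subtypeUnivEquiv (fun x i => ((Subgroup.mem_center_iff.mp (hc i)) x).symm)
    have e2 : (Σ x : {x : G // ∀ i, Commute (t i) x},
        {y : G // Commute x.1 y ∧ ∀ i, Commute (t i) y}) ≃
          {xy : G × G // Commute xy.1 xy.2} :=
      { toFun := fun s => ⟨⟨s.1.1, s.2.1⟩, s.2.2.1⟩
        invFun := fun q => ⟨⟨q.1.1, fun i => ((Subgroup.mem_center_iff.mp (hc i)) q.1.1).symm⟩,
          ⟨q.1.2, q.2, fun i => ((Subgroup.mem_center_iff.mp (hc i)) q.1.2).symm⟩⟩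
        left_inv := fun s => rfl
        right_inv := fun q => rfl }
    rw [Nat.card_congr e2, Nat.card_congr e1]
    exact mcd_core hna hp hmin hzc
  · push_neg at hc
    obtain ⟨i₀, hi₀⟩ := hc
    have eK : {x : G // ∀ i, Commute (t i) x} ≃ Subgroup.centralizer (Set.range t) :=
      Equiv.subtypeEquivRight fun x => by
        rw [Subgroup.mem_centralizer_iff]
        constructor
        · rintro h s ⟨i, rfl⟩; exact h i
        · intro h i; exact h (t i) ⟨i, rfl⟩
    have hKne : Subgroup.centralizer (Set.range t) ≠ ⊤ := by
      intro h
      exact hi₀ (Subgroup.centralizer_eq_top_iff_subset.mp h ⟨i₀, rfl⟩)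
    have hK : p * Nat.card {x : G // ∀ i, Commute (t i) x} ≤ Nat.card G := by
      rw [Nat.card_congr eK]
      exact mcd_proper hp hmin hKne
    have hfib : ∀ x : {x : G // ∀ i, Commute (t i) x},
        Nat.card {y : G // Commute x.1 y ∧ ∀ i, Commute (t i) y} ≤
          Nat.card {x : G // ∀ i, Commute (t i) x} := by
      intro x
      refine Nat.card_le_card_of_injective
        (fun y => (⟨y.1, y.2.2⟩ : {x : G // ∀ i, Commute (t i) x})) ?_
      intro y z h
      have h2 := congrArg Subtype.val h
      exact Subtype.ext h2
    rw [mcd_card_sigma]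
    have hsum : ∑ x : {x : G // ∀ i, Commute (t i) x},
        Nat.card {y : G // Commute x.1 y ∧ ∀ i, Commute (t i) y} ≤
          Nat.card {x : G // ∀ i, Commute (t i) x} *
            Nat.card {x : G // ∀ i, Commute (t i) x} := by
      calc ∑ x : {x : G // ∀ i, Commute (t i) x},
          Nat.card {y : G // Commute x.1 y ∧ ∀ i, Commute (t i) y}
          ≤ (Finset.univ : Finset {x : G // ∀ i, Commute (t i) x}).card •
              Nat.card {x : G // ∀ i, Commute (t i) x} :=
            Finset.sum_le_card_nsmul _ _ _ (fun x _ => hfib x)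
        _ = Nat.card {x : G // ∀ i, Commute (t i) x} *
              Nat.card {x : G // ∀ i, Commute (t i) x} := by
            rw [smul_eq_mul, Finset.card_univ, Nat.card_eq_fintype_card]
    calc p * ∑ x : {x : G // ∀ i, Commute (t i) x},
        Nat.card {y : G // Commute x.1 y ∧ ∀ i, Commute (t i) y}
        ≤ p * (Nat.card {x : G // ∀ i, Commute (t i) x} *
            Nat.card {x : G // ∀ i, Commute (t i) x}) := Nat.mul_le_mul_left _ hsum
      _ = (p * Nat.card {x : G // ∀ i, Commute (t i) x}) *
            Nat.card {x : G // ∀ i, Commute (t i) x} := by ring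
      _ ≤ Nat.card G * Nat.card {x : G // ∀ i, Commute (t i) x} :=
          Nat.mul_le_mul_right _ hK

private lemma mcd_step (hna : ¬ ∀ a b : G, a * b = b * a)
    {p : ℕ} (hp : p.Prime)
    (hmin : ∀ q : ℕ, q.Prime → q ∣ Nat.card G → p ≤ q)
    (hzc : Subgroup.center G ⊓ commutator G = ⊥) (m : ℕ) :
    p * Nat.card {f : Fin (m + 2) → G // ∀ i j, Commute (f i) (f j)} ≤
      Nat.card G * Nat.card {f : Fin (m + 1) → G // ∀ i j, Commute (f i) (f j)} := by
  classical
  cases nonempty_fintype G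
  rw [Nat.card_congr (mcdEquiv (G := G) (m + 1)), mcd_card_sigma,
    Nat.card_congr (mcdEquiv (G := G) m), mcd_card_sigma]
  have hre : ∑ s : (Σ t : {f : Fin m → G // ∀ i j, Commute (f i) (f j)},
        {x : G // ∀ i, Commute (t.1 i) x}),
        Nat.card {y : G // ∀ i, Commute ((Fin.cons s.2.1 s.1.1 : Fin (m + 1) → G) i) y} =
      ∑ t' : {f : Fin (m + 1) → G // ∀ i j, Commute (f i) (f j)},
        Nat.card {x : G // ∀ i, Commute (t'.1 i) x} :=
    Fintype.sum_equiv ((mcdEquiv (G := G) m).symm) _ _ (fun s => rfl)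
  rw [← hre, ← Finset.univ_sigma_univ, Finset.sum_sigma]
  have hper : ∀ t : {f : Fin m → G // ∀ i j, Commute (f i) (f j)},
      p * ∑ x : {x : G // ∀ i, Commute (t.1 i) x},
        Nat.card {y : G // ∀ i, Commute ((Fin.cons x.1 t.1 : Fin (m + 1) → G) i) y} ≤
      Nat.card G * Nat.card {x : G // ∀ i, Commute (t.1 i) x} := by
    intro t
    have h1 : ∑ x : {x : G // ∀ i, Commute (t.1 i) x},
        Nat.card {y : G // ∀ i, Commute ((Fin.cons x.1 t.1 : Fin (m + 1) → G) i) y} =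
        ∑ x : {x : G // ∀ i, Commute (t.1 i) x},
        Nat.card {y : G // Commute x.1 y ∧ ∀ i, Commute (t.1 i) y} :=
      Finset.sum_congr rfl fun x _ => Nat.card_congr (mcdConsEquiv t.1 x.1)
    rw [h1, ← mcd_card_sigma]
    exact mcd_per_t hna hp hmin hzc t.1
  calc p * ∑ t : {f : Fin m → G // ∀ i j, Commute (f i) (f j)},
      ∑ x : {x : G // ∀ i, Commute (t.1 i) x},
        Nat.card {y : G // ∀ i, Commute ((Fin.cons x.1 t.1 : Fin (m + 1) → G) i) y}
      = ∑ t : {f : Fin m → G // ∀ i j, Commute (f i) (f j)},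
          p * ∑ x : {x : G // ∀ i, Commute (t.1 i) x},
            Nat.card {y : G // ∀ i, Commute ((Fin.cons x.1 t.1 : Fin (m + 1) → G) i) y} :=
        Finset.mul_sum _ _ _
    _ ≤ ∑ t : {f : Fin m → G // ∀ i j, Commute (f i) (f j)},
          Nat.card G * Nat.card {x : G // ∀ i, Commute (t.1 i) x} :=
        Finset.sum_le_sum fun t _ => hper t
    _ = Nat.card G * ∑ t : {f : Fin m → G // ∀ i j, Commute (f i) (f j)},
          Nat.card {x : G // ∀ i, Commute (t.1 i) x} := (Finset.mul_sum _ _ _).symm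

private lemma mcd_base :
    Nat.card {f : Fin 1 → G // ∀ i j, Commute (f i) (f j)} = Nat.card G :=
  Nat.card_congr ((Equiv.subtypeUnivEquiv (fun f i j => by
    rw [Subsingleton.elim i j])).trans (Equiv.funUnique (Fin 1) G))

private lemma mcd_key (hna : ¬ ∀ a b : G, a * b = b * a)
    {p : ℕ} (hp : p.Prime)
    (hmin : ∀ q : ℕ, q.Prime → q ∣ Nat.card G → p ≤ q)
    (hzc : Subgroup.center G ⊓ commutator G = ⊥) :
    ∀ m : ℕ, p ^ m * Nat.card {f : Fin (m + 1) → G // ∀ i j, Commute (f i) (f j)} ≤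
      Nat.card G ^ (m + 1)
  | 0 => by
    rw [pow_zero, one_mul, mcd_base, pow_one]
  | (m + 1) => by
    have hstep := mcd_step hna hp hmin hzc m
    have hind := mcd_key hna hp hmin hzc m
    calc p ^ (m + 1) * Nat.card {f : Fin (m + 2) → G // ∀ i j, Commute (f i) (f j)}
        = p ^ m * (p * Nat.card {f : Fin (m + 2) → G // ∀ i j, Commute (f i) (f j)}) := by
          ring
      _ ≤ p ^ m * (Nat.card G *
            Nat.card {f : Fin (m + 1) → G // ∀ i j, Commute (f i) (f j)}) :=
          Nat.mul_le_mul_left _ hstep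
      _ = Nat.card G *
            (p ^ m * Nat.card {f : Fin (m + 1) → G // ∀ i j, Commute (f i) (f j)}) := by
          ring
      _ ≤ Nat.card G * Nat.card G ^ (m + 1) := Nat.mul_le_mul_left _ hind
      _ = Nat.card G ^ (m + 2) := by ring

end MCDAux

theorem multCommDegree_le_of_center_inf_commutator_eq_bot (G : Type*) [Group G] [Finite G]
    (hna : ¬ ∀ a b : G, a * b = b * a)
    (p : ℕ) (hp : p.Prime) (hdvd : p ∣ Nat.card G)
    (hmin : ∀ q : ℕ, q.Prime → q ∣ Nat.card G → p ≤ q)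
    (hzc : Subgroup.center G ⊓ commutator G = ⊥) (n : ℕ) :
    multCommDegree G n ≤ 1 / (p : ℚ) ^ n := by
  have hkey := mcd_key hna hp hmin hzc n
  unfold multCommDegree
  have hG1 : (0 : ℚ) < (Nat.card G : ℚ) := by exact_mod_cast Nat.card_pos
  have hG0 : (0 : ℚ) < (Nat.card G : ℚ) ^ (n + 1) := by positivity
  have hp1 : (0 : ℚ) < (p : ℚ) := by exact_mod_cast hp.pos
  have hp0 : (0 : ℚ) < (p : ℚ) ^ n := by positivity
  rw [div_le_div_iff₀ hG0 hp0, one_mul]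
  have : ((Nat.card {f : Fin (n + 1) → G // ∀ i j, Commute (f i) (f j)} : ℕ) : ℚ) *
      (p : ℚ) ^ n ≤ ((Nat.card G ^ (n + 1) : ℕ) : ℚ) := by
    rw [mul_comm]
    exact_mod_cast hkey
  simpa using this
end

section
/- Let n ≥ 3 be an odd natural number and let D_{2n} denote the dihedral group of order 2n. Then for every natural number m ≥ 1, d_m(D_{2n}) = (n^m + 2^{m+1} − 1)/(2·(2n)^m). -/
open DihedralGroup

namespace MCDaux

variable {n : ℕ}

def isRefl : DihedralGroup n → Bool
  | .r _ => false
  | .sr _ => true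

def rPart : DihedralGroup n → ZMod n
  | .r i => i
  | .sr _ => 0

def srIdx : DihedralGroup n → ZMod n
  | .r _ => 0
  | .sr i => i

lemma two_cancel (hodd : Odd n) {x y : ZMod n} (h : (2 : ZMod n) * x = 2 * y) :
    x = y := by
  have hu : IsUnit (2 : ZMod n) := by
    have h2 : ((2 : ℕ) : ZMod n) = (2 : ZMod n) := by push_cast; ring
    rw [← h2, ZMod.isUnit_iff_coprime]
    exact Nat.coprime_two_left.mpr hodd
  exact hu.mul_left_cancel h

lemma sr_comm (hodd : Odd n) {i j : ZMod n} (h : Commute (sr i : DihedralGroup n) (sr j)) :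
    i = j := by
  rw [Commute, SemiconjBy, sr_mul_sr, sr_mul_sr, r.injEq] at h
  apply two_cancel hodd
  linear_combination -h

lemma r_sr_comm (hodd : Odd n) {i j : ZMod n}
    (h : Commute (DihedralGroup.r i : DihedralGroup n) (sr j)) : i = 0 := by
  rw [Commute, SemiconjBy, r_mul_sr, sr_mul_r, sr.injEq] at h
  apply two_cancel hodd
  linear_combination -h

variable (n) in
abbrev T (m : ℕ) : Type :=
  (Fin (m + 1) → ZMod n) ⊕ (ZMod n × {g : Fin (m + 1) → Bool // g ≠ fun _ => false})

open scoped Classical in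
noncomputable def theEquiv (hodd : Odd n) (m : ℕ) :
    {f : Fin (m + 1) → DihedralGroup n // ∀ i j, Commute (f i) (f j)} ≃ T n m where
  toFun f :=
    if h : ∃ i, isRefl (f.1 i) = true then
      Sum.inr ⟨srIdx (f.1 h.choose),
        ⟨fun i => isRefl (f.1 i), fun hc => by
          have := congrFun hc h.choose
          rw [h.choose_spec] at this
          exact Bool.noConfusion this⟩⟩
    else
      Sum.inl (fun i => rPart (f.1 i))
  invFun x :=
    match x with
    | Sum.inl g => ⟨fun i => DihedralGroup.r (g i), by
        intro i j
        rw [Commute, SemiconjBy, r_mul_r, r_mul_r, add_comm]⟩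
    | Sum.inr ⟨k, g, _⟩ => ⟨fun i => if g i then sr k else DihedralGroup.r 0, by
        intro i j
        by_cases hi : g i <;> by_cases hj : g j <;>
          simp [hi, hj, Commute, SemiconjBy, r_mul_r, r_mul_sr, sr_mul_r, sr_mul_sr]⟩
  left_inv := by
    rintro ⟨f, hf⟩
    by_cases h : ∃ i, isRefl (f i) = true
    · simp only [h, dite_true]
      apply Subtype.ext
      funext i
      simp only
      obtain ⟨k0, hk0⟩ : ∃ k0, f h.choose = sr k0 := by
        have hs := h.choose_spec
        cases hfi : f h.choose with
        | r j => rw [hfi] at hs; simp [isRefl] at hs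
        | sr j => exact ⟨j, rfl⟩
      rw [hk0]
      have hsr : srIdx (sr k0 : DihedralGroup n) = k0 := rfl
      rw [hsr]
      obtain ⟨j, hfi⟩ | ⟨j, hfi⟩ : (∃ j, f i = DihedralGroup.r j) ∨ ∃ j, f i = sr j := by
        cases f i with
        | r j => exact Or.inl ⟨j, rfl⟩
        | sr j => exact Or.inr ⟨j, rfl⟩
      · have hj : j = 0 := by
          apply r_sr_comm hodd (j := k0)
          rw [← hfi, ← hk0]
          exact hf i _
        simp only [hfi, hj]
        simp [isRefl]
      · have hj : k0 = j := by
          apply sr_comm hodd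
          rw [← hfi, ← hk0]
          exact hf _ i
        simp only [hfi, hj]
        simp [isRefl]
    · simp only [h, dite_false]
      apply Subtype.ext
      funext i
      simp only
      push_neg at h
      have hs := h i
      cases hfi : f i with
      | r j => simp [rPart]
      | sr j => rw [hfi] at hs; simp [isRefl] at hs
  right_inv := by
    rintro (g | ⟨k, g, hg⟩)
    · have h : ¬ ∃ i, isRefl ((DihedralGroup.r (g i) : DihedralGroup n)) = true := by
        rintro ⟨i, hi⟩; simp [isRefl] at hi
      simp only [h, dite_false]
      rfl
    · have h : ∃ i, isRefl (if g i then (sr k : DihedralGroup n) else .r 0) = true := by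
        by_contra hc
        push_neg at hc
        apply hg
        funext i
        have := hc i
        by_cases hi : g i
        · rw [if_pos hi] at this; simp [isRefl] at this
        · simpa using hi
      simp only [h, dite_true]
      have h1 : srIdx (if g h.choose then (sr k : DihedralGroup n) else .r 0) = k := by
        have hs := h.choose_spec
        by_cases hi : g h.choose
        · rw [if_pos hi]; rfl
        · rw [if_neg hi] at hs; simp [isRefl] at hs
      have h2 : (fun i => isRefl (if g i then (sr k : DihedralGroup n) else .r 0)) = g := by
        funext i
        by_cases hi : g i <;> simp [hi, isRefl] <;> rfl
      apply congrArg Sum.inr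
      rw [Prod.mk.injEq]
      exact ⟨h1, Subtype.ext h2⟩
  
lemma card_comm (hodd : Odd n) (hn : 0 < n) (m : ℕ) :
    Nat.card {f : Fin (m + 1) → DihedralGroup n // ∀ i j, Commute (f i) (f j)} =
      n ^ (m + 1) + n * (2 ^ (m + 1) - 1) := by
  haveI : NeZero n := ⟨hn.ne'⟩
  rw [Nat.card_congr (theEquiv hodd m), T, Nat.card_sum, Nat.card_prod,
    Nat.card_eq_fintype_card, Nat.card_eq_fintype_card, Nat.card_eq_fintype_card]
  have hc : Fintype.card {g : Fin (m + 1) → Bool // g ≠ fun _ => false} =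
      Fintype.card (Fin (m + 1) → Bool) -
        Fintype.card {g : Fin (m + 1) → Bool // g = fun _ => false} :=
    Fintype.card_subtype_compl _
  rw [hc, Fintype.card_subtype_eq]
  simp [Fintype.card_fun, ZMod.card]

end MCDaux

theorem multCommDegree_dihedralGroup (n : ℕ) (hn : 3 ≤ n) (hodd : Odd n)
    (m : ℕ) (hm : 1 ≤ m) :
    multCommDegree (DihedralGroup n) m =
      ((n : ℚ) ^ m + 2 ^ (m + 1) - 1) / (2 * (2 * (n : ℚ)) ^ m) := by
  have hn0 : 0 < n := by omega
  rw [multCommDegree, MCDaux.card_comm hodd hn0 m, DihedralGroup.nat_card]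
  have h2 : (1 : ℕ) ≤ 2 ^ (m + 1) := Nat.one_le_two_pow
  have hnQ : (n : ℚ) ≠ 0 := by positivity
  push_cast [h2]
  rw [div_eq_div_iff (by positivity) (by positivity)]
  ring
end

section
/- Let n ≥ 1 be a natural number and let Q_n = ⟨a, b | a^n = b^2 = (ab)^2⟩ denote the generalized quaternion (dicyclic) group of order 4n. Then for every natural number m ≥ 1, d_m(Q_n) = (n^m + 2^{m+1} − 1)/(2·(2n)^m). -/
open QuaternionGroup Finset

section Aux
variable {n : ℕ}

private lemma zmod_add_self_eq_zero (hn : 1 ≤ n) (x : ZMod (2 * n)) :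
    x + x = 0 ↔ x = 0 ∨ x = (n : ZMod (2 * n)) := by
  haveI : NeZero (2 * n) := ⟨by omega⟩
  constructor
  · intro h
    have hx : ((x.val : ℕ) : ZMod (2 * n)) = x := ZMod.natCast_rightInverse x
    have h2 : ((2 * x.val : ℕ) : ZMod (2 * n)) = 0 := by
      push_cast [hx]; linear_combination h
    rw [ZMod.natCast_eq_zero_iff] at h2
    obtain ⟨c, hc⟩ := h2
    have hlt : x.val < 2 * n := ZMod.val_lt x
    have hval : x.val = 0 ∨ x.val = n := by
      rcases c with _ | _ | c
      · left; omega
      · right; omega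
      · exfalso; nlinarith
    rcases hval with hv | hv
    · left; rw [← hx, hv]; simp
    · right; rw [← hx, hv]
  · rintro (rfl | rfl)
    · simp
    · rw [← Nat.cast_add]
      have : (n + n : ℕ) = 2 * n := by ring
      rw [this, ZMod.natCast_self]

private lemma natCast_n_ne_zero (hn : 1 ≤ n) : ((n : ZMod (2 * n))) ≠ 0 := by
  haveI : NeZero (2 * n) := ⟨by omega⟩
  intro h
  rw [ZMod.natCast_eq_zero_iff] at h
  have := Nat.le_of_dvd (by omega) h
  omega

private lemma commute_a_a (i j : ZMod (2 * n)) :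
    Commute (QuaternionGroup.a i) (QuaternionGroup.a j) := by
  rw [commute_iff_eq, a_mul_a, a_mul_a, add_comm]

private lemma commute_a_xa_iff (hn : 1 ≤ n) (i j : ZMod (2 * n)) :
    Commute (QuaternionGroup.a i) (xa j) ↔ i = 0 ∨ i = (n : ZMod (2 * n)) := by
  rw [commute_iff_eq, a_mul_xa, xa_mul_a, xa.injEq, ← zmod_add_self_eq_zero hn]
  constructor
  · intro h; linear_combination -h
  · intro h; linear_combination -h

private lemma commute_xa_xa_iff (hn : 1 ≤ n) (i j : ZMod (2 * n)) :
    Commute (xa i) (xa j) ↔ j = i ∨ j = i + (n : ZMod (2 * n)) := by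
  rw [commute_iff_eq, xa_mul_xa, xa_mul_xa, a.injEq]
  have h1 : ((n : ZMod (2*n)) + j - i = (n : ZMod (2*n)) + i - j) ↔ (j - i) + (j - i) = 0 := by
    constructor <;> intro h <;> linear_combination h
  rw [h1, zmod_add_self_eq_zero hn]
  constructor
  · rintro (h | h)
    · left; linear_combination h
    · right; linear_combination h
  · rintro (h | h)
    · left; linear_combination h
    · right; linear_combination h

private lemma nn_zero (hn : 1 ≤ n) : (n : ZMod (2 * n)) + (n : ZMod (2 * n)) = 0 :=
  (zmod_add_self_eq_zero hn _).mpr (Or.inr rfl)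

/-- The centralizer of `xa k` as a finset. -/
private def Cf (n : ℕ) (k : ZMod (2 * n)) : Finset (QuaternionGroup n) :=
  {QuaternionGroup.a 0, QuaternionGroup.a (n : ZMod (2 * n)), xa k, xa (k + (n : ZMod (2 * n)))}

private lemma mem_Cf_iff_commute (hn : 1 ≤ n) (k : ZMod (2 * n)) (g : QuaternionGroup n) :
    g ∈ Cf n k ↔ Commute g (xa k) := by
  rcases g with j | j
  · rw [commute_a_xa_iff hn]
    simp only [Cf, mem_insert, mem_singleton, a.injEq, reduceCtorEq, or_false, false_or]
  · rw [commute_xa_xa_iff hn]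
    simp only [Cf, mem_insert, mem_singleton, xa.injEq, reduceCtorEq, false_or]
    constructor
    · rintro (rfl | rfl)
      · left; rfl
      · right; rw [add_assoc, nn_zero hn, add_zero]
    · rintro (rfl | rfl)
      · left; rfl
      · right; rw [add_assoc, nn_zero hn, add_zero]

private lemma Cf_add_n (hn : 1 ≤ n) (k : ZMod (2 * n)) : Cf n (k + n) = Cf n k := by
  have h : k + (n : ZMod (2 * n)) + n = k := by rw [add_assoc, nn_zero hn, add_zero]
  ext g
  simp only [Cf, mem_insert, mem_singleton, h]
  tauto

private lemma commute_of_mem_Cf (hn : 1 ≤ n) (k : ZMod (2 * n)) {g h : QuaternionGroup n}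
    (hg : g ∈ Cf n k) (hh : h ∈ Cf n k) : Commute g h := by
  simp only [Cf, mem_insert, mem_singleton] at hg hh
  have hkk : k + (n : ZMod (2*n)) + n = k := by rw [add_assoc, nn_zero hn, add_zero]
  rcases hg with rfl | rfl | rfl | rfl <;> rcases hh with rfl | rfl | rfl | rfl
  · exact Commute.refl _
  · exact commute_a_a _ _
  · exact (commute_a_xa_iff hn _ _).mpr (Or.inl rfl)
  · exact (commute_a_xa_iff hn _ _).mpr (Or.inl rfl)
  · exact commute_a_a _ _
  · exact Commute.refl _
  · exact (commute_a_xa_iff hn _ _).mpr (Or.inr rfl)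
  · exact (commute_a_xa_iff hn _ _).mpr (Or.inr rfl)
  · exact ((commute_a_xa_iff hn _ _).mpr (Or.inl rfl)).symm
  · exact ((commute_a_xa_iff hn _ _).mpr (Or.inr rfl)).symm
  · exact Commute.refl _
  · exact (commute_xa_xa_iff hn _ _).mpr (Or.inr rfl)
  · exact ((commute_a_xa_iff hn _ _).mpr (Or.inl rfl)).symm
  · exact ((commute_a_xa_iff hn _ _).mpr (Or.inr rfl)).symm
  · exact (commute_xa_xa_iff hn _ _).mpr (Or.inr hkk.symm)
  · exact Commute.refl _

private lemma card_Cf (hn : 1 ≤ n) (k : ZMod (2 * n)) : (Cf n k).card = 4 := by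
  have h0 : (n : ZMod (2 * n)) ≠ 0 := natCast_n_ne_zero hn
  have h1 : k ≠ k + n := by
    intro h; exact h0 (by linear_combination -h)
  simp only [Cf]
  rw [card_insert_of_notMem (by simp only [mem_insert, mem_singleton, a.injEq, reduceCtorEq, or_false]; exact Ne.symm h0),
    card_insert_of_notMem (by simp), card_insert_of_notMem (by simp [h1]),
    card_singleton]

private lemma card_filter_neg {α : Type*} [DecidableEq α] (s : Finset α) (p : α → Prop)
    [DecidablePred p] [∀ x, Decidable (¬ p x)] :
    (s.filter fun a => ¬ p a).card = s.card - (s.filter p).card := by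
  have h1 : (s.filter fun a => ¬ p a) = s \ s.filter p := by
    ext a
    simp only [Finset.mem_filter, Finset.mem_sdiff]
    tauto
  rw [h1, Finset.card_sdiff_of_subset (Finset.filter_subset _ _)]

private lemma card_commuting (hn : 1 ≤ n) (m : ℕ) :
    Nat.card {f : Fin (m+1) → QuaternionGroup n // ∀ i j, Commute (f i) (f j)} =
      (2*n)^(m+1) + n * (4^(m+1) - 2^(m+1)) := by
  classical
  haveI : NeZero (2 * n) := ⟨by omega⟩
  haveI : NeZero n := ⟨by omega⟩
  set G := QuaternionGroup n with hGdef
  let P : (Fin (m+1) → G) → Prop := fun f => ∀ i j, Commute (f i) (f j)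
  let allA : (Fin (m+1) → G) → Prop := fun f => ∀ i, ∃ k, f i = QuaternionGroup.a k
  -- the number of "all a" tuples
  have hA : (univ.filter allA).card = (2*n)^(m+1) := by
    rw [← Fintype.card_subtype]
    have e : {f : Fin (m+1) → G // allA f} ≃ (Fin (m+1) → ZMod (2*n)) :=
      { toFun := fun f i => (match f.1 i with
          | QuaternionGroup.a k => k
          | xa k => k)
        invFun := fun g => ⟨fun i => QuaternionGroup.a (g i), fun i => ⟨g i, rfl⟩⟩
        left_inv := by
          rintro ⟨f, hf⟩
          apply Subtype.ext
          funext i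
          obtain ⟨k, hk⟩ := hf i
          simp [hk]
        right_inv := fun g => rfl }
    rw [Fintype.card_congr e]
    simp [ZMod.card]
  -- q k f : all values of f lie in the centralizer of xa k, and f is not all-a
  let q : ZMod (2*n) → (Fin (m+1) → G) → Prop := fun k f => (∀ i, f i ∈ Cf n k) ∧ ¬ allA f
  have hq_card : ∀ k : ZMod (2*n), (univ.filter (q k)).card = 4^(m+1) - 2^(m+1) := by
    intro k
    have h2 : univ.filter (q k)
        = (Fintype.piFinset (fun _ : Fin (m+1) => Cf n k)).filter (fun f => ¬ allA f) := by
      ext f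
      simp only [mem_filter, mem_univ, true_and, Fintype.mem_piFinset, q]
    have h3 : (Fintype.piFinset (fun _ : Fin (m+1) => Cf n k)).filter allA
        = Fintype.piFinset (fun _ : Fin (m+1) =>
            ({QuaternionGroup.a 0, QuaternionGroup.a (n : ZMod (2*n))} : Finset G)) := by
      ext f
      simp only [mem_filter, Fintype.mem_piFinset, mem_insert, mem_singleton]
      constructor
      · rintro ⟨h, hall⟩ i
        obtain ⟨j, hj⟩ := hall i
        have hi := h i
        rw [hj] at hi ⊢
        have hi2 : j = 0 ∨ j = (n : ZMod (2*n)) := by simpa only [Cf, mem_insert, mem_singleton, a.injEq, reduceCtorEq, or_false, false_or] using hi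
        rcases hi2 with rfl | rfl
        · left; rfl
        · right; rfl
      · intro h
        refine ⟨fun i => ?_, fun i => ?_⟩
        · rcases h i with h' | h' <;> simp [Cf, h']
        · rcases h i with h' | h' <;> exact ⟨_, h'⟩
    have c1 : (Fintype.piFinset (fun _ : Fin (m+1) => Cf n k)).card = 4^(m+1) := by
      rw [Fintype.card_piFinset]
      simp [card_Cf hn k]
    have c2 : ((Fintype.piFinset (fun _ : Fin (m+1) => Cf n k)).filter allA).card
        = 2^(m+1) := by
      rw [h3, Fintype.card_piFinset]
      have hne : (QuaternionGroup.a 0 : G) ≠ QuaternionGroup.a (n : ZMod (2*n)) := by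
        simp only [ne_eq, a.injEq]
        exact fun h => natCast_n_ne_zero hn h.symm
      rw [Finset.prod_const, card_pair hne, card_univ, Fintype.card_fin]
    rw [h2, card_filter_neg _ allA, c1, c2]
  -- fiber over f
  have fiber : ∀ f : Fin (m+1) → G,
      (univ.filter (fun k => q k f)).card = if P f ∧ ¬ allA f then 2 else 0 := by
    intro f
    by_cases hall : allA f
    · have hempty : univ.filter (fun k => q k f) = ∅ := by
        ext k
        simp only [mem_filter, mem_univ, true_and, notMem_empty, iff_false, q, not_and,
          not_not]
        exact fun _ => hall
      rw [hempty, if_neg (fun h => h.2 hall)]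
      simp
    · obtain ⟨i0, h0⟩ := not_forall.mp hall
      have h0' : ∀ k, f i0 ≠ QuaternionGroup.a k := not_exists.mp h0
      obtain ⟨k0, hk0⟩ : ∃ k0, f i0 = xa k0 := by
        rcases hfi : f i0 with j | j
        · exact absurd hfi (h0' j)
        · exact ⟨j, rfl⟩
      by_cases hP : P f
      · have hset : univ.filter (fun k => q k f)
            = ({k0, k0 + (n : ZMod (2*n))} : Finset (ZMod (2*n))) := by
          ext k
          simp only [mem_filter, mem_univ, true_and, mem_insert, mem_singleton, q]
          constructor
          · rintro ⟨hmem, -⟩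
            have hi := hmem i0
            rw [hk0, mem_Cf_iff_commute hn] at hi
            exact (commute_xa_xa_iff hn _ _).mp hi
          · rintro (rfl | rfl)
            · exact ⟨fun i => (mem_Cf_iff_commute hn _ _).mpr (by rw [← hk0]; exact hP i i0),
                hall⟩
            · refine ⟨fun i => ?_, hall⟩
              rw [Cf_add_n hn]
              exact (mem_Cf_iff_commute hn _ _).mpr (by rw [← hk0]; exact hP i i0)
        rw [hset, if_pos ⟨hP, hall⟩, card_pair]
        intro h
        exact natCast_n_ne_zero hn (by linear_combination -h)
      · have hset : univ.filter (fun k => q k f) = ∅ := by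
          ext k
          simp only [mem_filter, mem_univ, true_and, notMem_empty, iff_false, q, not_and]
          intro hmem
          exact absurd (fun i j => commute_of_mem_Cf hn k (hmem i) (hmem j)) hP
        rw [hset]
        simp [hP]
  -- double counting
  have hsum : ∑ k : ZMod (2*n), (univ.filter (q k)).card
      = 2 * (univ.filter (fun f => P f ∧ ¬ allA f)).card := by
    calc ∑ k : ZMod (2*n), (univ.filter (q k)).card
        = ∑ k : ZMod (2*n), ∑ f : Fin (m+1) → G, (if q k f then 1 else 0) := by
          refine Finset.sum_congr rfl fun k _ => ?_
          rw [Finset.card_filter]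
      _ = ∑ f : Fin (m+1) → G, ∑ k : ZMod (2*n), (if q k f then 1 else 0) :=
          Finset.sum_comm
      _ = ∑ f : Fin (m+1) → G, (univ.filter (fun k => q k f)).card := by
          refine Finset.sum_congr rfl fun f _ => ?_
          rw [Finset.card_filter]
      _ = ∑ f : Fin (m+1) → G, (if P f ∧ ¬ allA f then 2 else 0) :=
          Finset.sum_congr rfl fun f _ => fiber f
      _ = ∑ f ∈ univ.filter (fun f => P f ∧ ¬ allA f), 2 := (Finset.sum_filter _ _).symm
      _ = 2 * (univ.filter (fun f => P f ∧ ¬ allA f)).card := by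
          rw [Finset.sum_const, smul_eq_mul, mul_comm]
  have hsum2 : ∑ k : ZMod (2*n), (univ.filter (q k)).card
      = 2 * n * (4^(m+1) - 2^(m+1)) := by
    rw [Finset.sum_congr rfl (fun k _ => hq_card k), Finset.sum_const, smul_eq_mul,
      card_univ, ZMod.card]
  have hT : (univ.filter (fun f => P f ∧ ¬ allA f)).card = n * (4^(m+1) - 2^(m+1)) := by
    have h2T : 2 * (univ.filter (fun f => P f ∧ ¬ allA f)).card
        = 2 * (n * (4^(m+1) - 2^(m+1))) := by
      rw [← hsum, hsum2, mul_assoc]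
    exact Nat.eq_of_mul_eq_mul_left (by norm_num) h2T
  -- assemble
  rw [Nat.card_eq_fintype_card, Fintype.card_subtype]
  have hPA : (univ.filter P).filter allA = univ.filter allA := by
    ext f
    simp only [mem_filter, mem_univ, true_and]
    constructor
    · rintro ⟨-, h⟩; exact h
    · intro h
      refine ⟨fun i j => ?_, h⟩
      obtain ⟨k, hk⟩ := h i
      obtain ⟨l, hl⟩ := h j
      rw [hk, hl]
      exact commute_a_a _ _
  have hPnA : (univ.filter P).filter (fun f => ¬ allA f)
      = univ.filter (fun f => P f ∧ ¬ allA f) := by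
    rw [Finset.filter_filter]
  have e3 := card_filter_neg (univ.filter P) allA
  rw [hPnA, hPA, hA, hT] at e3
  have e4 : (univ.filter allA).card ≤ (univ.filter P).card := by
    rw [← hPA]
    exact card_filter_le _ _
  rw [hA] at e4
  set X := (univ.filter P).card
  set A := (2*n)^(m+1) with hAdef
  set Y := n * (4^(m+1) - 2^(m+1)) with hYdef
  omega

end Aux

theorem multCommDegree_quaternionGroup (n : ℕ) (hn : 1 ≤ n) (m : ℕ) (hm : 1 ≤ m) :
    multCommDegree (QuaternionGroup n) m =
      ((n : ℚ) ^ m + 2 ^ (m + 1) - 1) / (2 * (2 * (n : ℚ)) ^ m) := by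
  haveI : NeZero n := ⟨by omega⟩
  rw [multCommDegree, card_commuting hn m]
  have hG : Nat.card (QuaternionGroup n) = 4 * n := by
    rw [Nat.card_eq_fintype_card, QuaternionGroup.card]
  rw [hG]
  have hle : (2:ℕ)^(m+1) ≤ 4^(m+1) := Nat.pow_le_pow_left (by norm_num) _
  have hn0 : (0:ℚ) < n := by exact_mod_cast hn
  push_cast [Nat.cast_sub hle]
  rw [div_eq_div_iff (by positivity) (by positivity)]
  have p1 : (2*(n:ℚ))^(m+1) = (2*2^m) * ((n:ℚ) * (n:ℚ)^m) := by
    rw [mul_pow, pow_succ]; ring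
  have p2 : (2*(n:ℚ))^m = 2^m * (n:ℚ)^m := mul_pow _ _ _
  have p3 : (4*(n:ℚ))^(m+1) = (4*(2^m*2^m)) * ((n:ℚ) * (n:ℚ)^m) := by
    rw [mul_pow, pow_succ, show (4:ℚ) = 2*2 by norm_num, mul_pow]; ring
  have p4 : (4:ℚ)^(m+1) = 4*(2^m*2^m) := by
    rw [show (4:ℚ) = 2*2 by norm_num, mul_pow, pow_succ]; ring
  have p5 : (2:ℚ)^(m+1) = 2*2^m := by rw [pow_succ]; ring
  rw [p1, p3, p4, p5, p2]
  set XX := (2:ℚ)^m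
  set YY := (n:ℚ)^m
  ring
end
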